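/- Let G be an n-sum of multigraphs K and H along an n-element vertex set U (n ≥ 1), and let x, y be real numbers with x ≠ 1 and y ≠ 1. Let B = (b_{AB}) be any real matrix indexed by Γ(U) satisfying T_n(t) · B · T_n(t) = T_n(t) for t = (x−1)(y−1). Then T(G;x,y) = Σ_{A,B ∈ Γ(U)} c_{AB} · T(K/A;x,y) · T(H/B;x,y), where c_{AB} = b_{AB} · (x−1)^{ω(K/A)+ω(H/B)−ω(G)} · (y−1)^{|A|+|B|−n}, the powers being integer powers (zpow, the exponents may be negative). -/

import Mathlib

attribute [local instance] Classical.propDecidable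

/-- A multigraph: a finite vertex type, a finite edge index type, and an endpoint
map sending each edge to an unordered pair of vertices. -/
structure Multigraph where
  V : Type
  E : Type
  [finV : Fintype V]
  [finE : Fintype E]
  ends : E → Sym2 V

attribute [instance] Multigraph.finV Multigraph.finE

namespace Multigraph

/-- Two vertices are related if some edge of `S` has them as its endpoints. -/
def rel (G : Multigraph) (S : Finset G.E) (v w : G.V) : Prop :=
  ∃ e ∈ S, G.ends e = s(v, w)

/-- `ω(S)`: the number of connected components of the spanning subgraph `(V(G), S)`. -/
noncomputable def omega (G : Multigraph) (S : Finset G.E) : ℕ :=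
  Nat.card (Quotient (Relation.EqvGen.setoid (G.rel S)))

/-- `ω(G)`: the number of connected components of `G`. -/
noncomputable def omegaG (G : Multigraph) : ℕ :=
  G.omega Finset.univ

/-- The Negami polynomial `f(G;t,x,y)`. -/
noncomputable def negami (G : Multigraph) (t x y : ℝ) : ℝ :=
  ∑ S : Finset G.E, t ^ G.omega S * x ^ S.card * y ^ (Fintype.card G.E - S.card)

/-- The Tutte polynomial `T(G;x,y)`. -/
noncomputable def tutte (G : Multigraph) (x y : ℝ) : ℝ :=
  ∑ S : Finset G.E,
    (x - 1) ^ (G.omega S - G.omegaG) *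
      (y - 1) ^ (G.omega S + S.card - Fintype.card G.V)

end Multigraph

/-- The setoid on `V` extending a setoid `A` on the subset `U`: its nontrivial
classes are exactly the blocks of `A`. -/
def extendSetoid {V : Type} (U : Set V) (A : Setoid U) : Setoid V where
  r v w := v = w ∨ ∃ (hv : v ∈ U) (hw : w ∈ U), A.r ⟨v, hv⟩ ⟨w, hw⟩
  iseqv := by
    constructor
    · exact fun v => Or.inl rfl
    · rintro v w (rfl | ⟨hv, hw, h⟩)
      · exact Or.inl rfl
      · exact Or.inr ⟨hw, hv, A.symm h⟩
    · rintro v w z (rfl | ⟨hv, hw, h⟩) (rfl | ⟨hw', hz, h'⟩)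
      · exact Or.inl rfl
      · exact Or.inr ⟨hw', hz, h'⟩
      · exact Or.inr ⟨hv, hw, h⟩
      · exact Or.inr ⟨hv, hz, A.trans h h'⟩

namespace Multigraph

/-- The contraction `K/A` of a multigraph `K` by a partition `A` of a subset `U` of
its vertices: all vertices in a common block of `A` are identified. -/
noncomputable def contract (K : Multigraph) {U : Set K.V} (A : Setoid U) : Multigraph where
  V := Quotient (extendSetoid U A)
  E := K.E
  finV := Fintype.ofFinite _
  finE := K.finE
  ends e := (K.ends e).map (Quotient.mk (extendSetoid U A))

/-- `P(S)`: the partition of `U` in which two vertices lie in the same block iff they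
lie in the same connected component of the spanning subgraph `(V(K), S)`. -/
def part (K : Multigraph) (U : Set K.V) (S : Finset K.E) : Setoid U :=
  Setoid.comap Subtype.val (Relation.EqvGen.setoid (K.rel S))

/-- The auxiliary Negami polynomial `f_A(K;t,x,y)`. -/
noncomputable def negamiAux (K : Multigraph) (U : Set K.V) (A : Setoid U) (t x y : ℝ) : ℝ :=
  ∑ S : Finset K.E,
    if K.part U S = A then
      t ^ (K.omega S - Nat.card (Quotient A)) * x ^ S.card *
        y ^ (Fintype.card K.E - S.card)
    else 0

/-- The auxiliary Tutte polynomial `T_A(K;x,y)`. -/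
noncomputable def tutteAux (K : Multigraph) (U : Set K.V) (A : Setoid U) (x y : ℝ) : ℝ :=
  ∑ S : Finset K.E,
    if K.part U S = A then
      (x - 1) ^ (K.omega S - Nat.card (Quotient A)) *
        (y - 1) ^ (K.omega S + S.card - Fintype.card K.V)
    else 0

end Multigraph

/-- The set of partitions of a finite type is finite. -/
instance setoidFinite {α : Type} [Finite α] : Finite (Setoid α) :=
  Finite.of_injective (fun s : Setoid α => s.r) fun a b h => by
    cases a; cases b; simp only at h; subst h; rfl

noncomputable instance setoidFintype {α : Type} [Finite α] : Fintype (Setoid α) :=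
  Fintype.ofFinite _

/-- The number of blocks `|A|` of a partition (setoid) `A`. -/
noncomputable def nblocks {α : Type} (A : Setoid α) : ℕ :=
  Nat.card (Quotient A)

/-- The matrix `T_n(t)` indexed by partitions of `α`, with `(A,B)`-entry
`t^{|A∧B|}` where `A∧B` is the finest common coarsening (the join `A ⊔ B`). -/
noncomputable def Tmat (α : Type) [Finite α] (t : ℝ) :
    Matrix (Setoid α) (Setoid α) ℝ :=
  Matrix.of fun A B => t ^ nblocks (A ⊔ B)

/-- The matrix `L_n(x)` indexed by partitions of `α`, with `(A,B)`-entry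
`(x-1)^{|A∧B|-1}` if `|A∧B| + n = |A| + |B|` and `0` otherwise. -/
noncomputable def Lmat (α : Type) [Finite α] (n : ℕ) (x : ℝ) :
    Matrix (Setoid α) (Setoid α) ℝ :=
  Matrix.of fun A B =>
    if nblocks (A ⊔ B) + n = nblocks A + nblocks B then
      (x - 1) ^ (nblocks (A ⊔ B) - 1)
    else 0

/-- The connectivity matrix `A_n` indexed by partitions of `α`, with `(A,B)`-entry
`1` if `|A∧B| = 1` and `0` otherwise. -/
noncomputable def Amat (α : Type) [Finite α] :
    Matrix (Setoid α) (Setoid α) ℝ :=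
  Matrix.of fun A B => if nblocks (A ⊔ B) = 1 then (1 : ℝ) else 0

/-- `G` is an `n`-sum of `K` and `H` along `U`: `V(G) = V(K) ∪ V(H)`,
`V(K) ∩ V(H) = U`, and `E(G)` is the disjoint union of `E(K)` and `E(H)` with the
inherited endpoint maps. -/
structure NSum (G K H : Multigraph) (U : Set G.V) where
  ιK : K.V → G.V
  ιH : H.V → G.V
  injK : Function.Injective ιK
  injH : Function.Injective ιH
  cover : Set.range ιK ∪ Set.range ιH = Set.univ
  inter : Set.range ιK ∩ Set.range ιH = U
  edgeEquiv : G.E ≃ K.E ⊕ H.E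
  endsK : ∀ a, G.ends (edgeEquiv.symm (Sum.inl a)) = (K.ends a).map ιK
  endsH : ∀ a, G.ends (edgeEquiv.symm (Sum.inr a)) = (H.ends a).map ιH

namespace NSum

variable {G K H : Multigraph} {U : Set G.V}

/-- The copy of a partition `A` of `U` on the corresponding subset of `V(K)`. -/
def pullK (σ : NSum G K H U) (A : Setoid U) : Setoid (σ.ιK ⁻¹' U : Set K.V) :=
  Setoid.comap (fun v => ⟨σ.ιK v.1, v.2⟩) A

/-- The copy of a partition `A` of `U` on the corresponding subset of `V(H)`. -/
def pullH (σ : NSum G K H U) (A : Setoid U) : Setoid (σ.ιH ⁻¹' U : Set H.V) :=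
  Setoid.comap (fun v => ⟨σ.ιH v.1, v.2⟩) A

/-- The contraction `K/A` for a partition `A` of the common vertex set `U`. -/
noncomputable def contractK (σ : NSum G K H U) (A : Setoid U) : Multigraph :=
  K.contract (σ.pullK A)

/-- The contraction `H/B` for a partition `B` of the common vertex set `U`. -/
noncomputable def contractH (σ : NSum G K H U) (B : Setoid U) : Multigraph :=
  H.contract (σ.pullH B)

end NSum


open Relation


section CountAux

variable {V : Type}

theorem Setoid.comap_mono' {α β : Type*} (f : α → β) {r s : Setoid β} (h : r ≤ s) :
    Setoid.comap f r ≤ Setoid.comap f s := by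
  intro x y hxy
  exact h hxy

theorem card_quot_le_of_le [Finite V] {s t : Setoid V} (h : s ≤ t) :
    Nat.card (Quotient t) ≤ Nat.card (Quotient s) := by
  apply Nat.card_le_card_of_surjective (Setoid.map_of_le h)
  intro q
  obtain ⟨x, rfl⟩ := Quotient.exists_rep q
  exact ⟨Quotient.mk s x, rfl⟩

theorem eqvGen_false {r : V → V → Prop} (hr : ∀ x y, ¬ r x y) {x y : V}
    (h : EqvGen r x y) : x = y := by
  induction h with
  | rel a b h => exact absurd h (hr a b)
  | refl => rfl
  | symm a b _ ih => exact ih.symm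
  | trans a b c _ _ ih1 ih2 => exact ih1.trans ih2

theorem card_quot_eqvGen_false [Finite V] {r : V → V → Prop} (hr : ∀ x y, ¬ r x y) :
    Nat.card (Quotient (EqvGen.setoid r)) = Nat.card V := by
  symm
  apply Nat.card_congr (Equiv.ofBijective (Quotient.mk (EqvGen.setoid r)) ⟨?_, ?_⟩)
  · intro a b h
    exact eqvGen_false hr (Quotient.exact h)
  · intro q; exact Quotient.exists_rep q

/-- The join of `s` with the pair setoid identifying `a` and `b`, described explicitly. -/
def pairJoin (s : Setoid V) (a b : V) : Setoid V where
  r x y := s x y ∨ ((s x a ∨ s x b) ∧ (s y a ∨ s y b))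
  iseqv := by
    constructor
    · exact fun x => Or.inl (s.refl x)
    · rintro x y (h | ⟨h1, h2⟩)
      · exact Or.inl (s.symm h)
      · exact Or.inr ⟨h2, h1⟩
    · rintro x y z (h | ⟨h1, h2⟩) (hp | ⟨hp1, hp2⟩)
      · exact Or.inl (s.trans h hp)
      · exact Or.inr ⟨hp1.imp (s.trans h) (s.trans h), hp2⟩
      · exact Or.inr ⟨h1, h2.imp (s.trans (s.symm hp)) (s.trans (s.symm hp))⟩
      · exact Or.inr ⟨h1, hp2⟩

theorem sup_pair_eq (s : Setoid V) (a b : V) {r0 : V → V → Prop}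
    (hr0 : ∀ v w, r0 v w ↔ ((v = a ∧ w = b) ∨ (v = b ∧ w = a))) :
    s ⊔ EqvGen.setoid r0 = pairJoin s a b := by
  apply le_antisymm
  · apply sup_le
    · intro x y h; exact Or.inl h
    · apply Setoid.eqvGen_le
      intro x y h
      rcases (hr0 x y).1 h with ⟨rfl, rfl⟩ | ⟨rfl, rfl⟩
      · exact Or.inr ⟨Or.inl (s.refl x), Or.inr (s.refl y)⟩
      · exact Or.inr ⟨Or.inr (s.refl x), Or.inl (s.refl y)⟩
  · intro x y h
    set t := s ⊔ EqvGen.setoid r0 with ht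
    have hs : s ≤ t := le_sup_left
    have hab : t a b := by
      have : EqvGen.setoid r0 ≤ t := le_sup_right
      exact this (EqvGen.rel a b ((hr0 a b).2 (Or.inl ⟨rfl, rfl⟩)))
    rcases h with h | ⟨h1, h2⟩
    · exact hs h
    · have hxb : t x b := by
        rcases h1 with h1 | h1
        · exact t.trans (hs h1) hab
        · exact hs h1
      have hyb : t y b := by
        rcases h2 with h2 | h2
        · exact t.trans (hs h2) hab
        · exact hs h2
      exact t.trans hxb (t.symm hyb)

theorem card_quot_le_pairJoin [Finite V] (s : Setoid V) (a b : V) :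
    Nat.card (Quotient s) ≤ Nat.card (Quotient (pairJoin s a b)) + 1 := by
  have wd : ∀ x y, s x y →
      (if s x b then (Sum.inr () : Quotient (pairJoin s a b) ⊕ Unit)
        else Sum.inl (Quotient.mk _ x)) =
      (if s y b then (Sum.inr () : Quotient (pairJoin s a b) ⊕ Unit)
        else Sum.inl (Quotient.mk _ y)) := by
    intro x y h
    by_cases hxb : s x b
    · have hyb : s y b := s.trans (s.symm h) hxb
      simp [hxb, hyb]
    · have hyb : ¬ s y b := fun hyb => hxb (s.trans h hyb)
      have : Quotient.mk (pairJoin s a b) x = Quotient.mk _ y :=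
        Quotient.sound (Or.inl h)
      simp [hxb, hyb, this]
  have hinj : Function.Injective (Quotient.lift _ wd) := by
    intro q1 q2 h
    obtain ⟨x, rfl⟩ := Quotient.exists_rep q1
    obtain ⟨y, rfl⟩ := Quotient.exists_rep q2
    simp only [Quotient.lift_mk] at h
    by_cases hxb : s x b <;> by_cases hyb : s y b <;> simp [hxb, hyb] at h
    · exact Quotient.sound (s.trans hxb (s.symm hyb))
    · rcases Quotient.exact h with h' | ⟨h1, h2⟩
      · exact Quotient.sound h'
      · have hxa : s x a := h1.resolve_right hxb
        have hya : s y a := h2.resolve_right hyb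
        exact Quotient.sound (s.trans hxa (s.symm hya))
  calc Nat.card (Quotient s) ≤ Nat.card (Quotient (pairJoin s a b) ⊕ Unit) :=
        Nat.card_le_card_of_injective _ hinj
    _ = Nat.card (Quotient (pairJoin s a b)) + 1 := by simp [Nat.card_sum]

theorem eqvGen_or (r r' : V → V → Prop) :
    EqvGen.setoid (fun x y => r x y ∨ r' x y) = EqvGen.setoid r ⊔ EqvGen.setoid r' := by
  apply le_antisymm
  · apply Setoid.eqvGen_le
    rintro x y (h | h)
    · exact (le_sup_left : EqvGen.setoid r ≤ _) (EqvGen.rel x y h)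
    · exact (le_sup_right : EqvGen.setoid r' ≤ _) (EqvGen.rel x y h)
  · apply sup_le <;> exact Setoid.eqvGen_mono (fun x y h => by tauto)

end CountAux

section SplitAux

variable {V : Type}

theorem card_quot_split [Finite V] (s : Setoid V) (U : Set V) :
    Nat.card (Quotient s) =
      Nat.card {q : Quotient s // ¬ ∃ u : U, Quotient.mk s u.val = q} +
        Nat.card (Quotient (Setoid.comap (Subtype.val : U → V) s)) := by
  have e1 : Quotient (Setoid.comap (Subtype.val : U → V) s) ≃
      {q : Quotient s // ∃ u : U, Quotient.mk s u.val = q} := by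
    apply Equiv.ofBijective
      (Quotient.lift (fun u : U => (⟨Quotient.mk s u.val, u, rfl⟩ :
        {q : Quotient s // ∃ u : U, Quotient.mk s u.val = q}))
        (fun u v h => Subtype.ext (Quotient.sound h)))
    constructor
    · intro q1 q2 h
      obtain ⟨u, rfl⟩ := Quotient.exists_rep q1
      obtain ⟨v, rfl⟩ := Quotient.exists_rep q2
      simp only [Quotient.lift_mk, Subtype.mk.injEq] at h
      have h2 : s u.val v.val := Quotient.exact h
      exact Quotient.sound h2
    · rintro ⟨q, u, hu⟩
      exact ⟨Quotient.mk _ u, Subtype.ext hu⟩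
  have e2 : Quotient s ≃ {q : Quotient s // ∃ u : U, Quotient.mk s u.val = q} ⊕
      {q : Quotient s // ¬ ∃ u : U, Quotient.mk s u.val = q} :=
    (Equiv.sumCompl _).symm
  rw [Nat.card_congr e2, Nat.card_sum, Nat.card_congr e1.symm]
  omega

/-- Pushforward of a setoid along an injective map: identity outside the range. -/
def pushSetoid {α : Type} (f : α → V) (hf : Function.Injective f) (s : Setoid α) :
    Setoid V where
  r x y := x = y ∨ ∃ a b, s a b ∧ f a = x ∧ f b = y
  iseqv := by
    constructor
    · exact fun x => Or.inl rfl
    · rintro x y (rfl | ⟨a, b, h, rfl, rfl⟩)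
      · exact Or.inl rfl
      · exact Or.inr ⟨b, a, s.symm h, rfl, rfl⟩
    · rintro x y z (rfl | ⟨a, b, h, rfl, rfl⟩) (rfl | ⟨c, d, h2, hc, rfl⟩)
      · exact Or.inl rfl
      · exact Or.inr ⟨c, d, h2, hc, rfl⟩
      · exact Or.inr ⟨a, b, h, rfl, rfl⟩
      · exact Or.inr ⟨a, d, s.trans h (hf hc ▸ h2), rfl, rfl⟩

theorem eqvGen_push {α : Type} (f : α → V) (hf : Function.Injective f)
    (r : α → α → Prop) :
    EqvGen.setoid (fun x y => ∃ a b, r a b ∧ f a = x ∧ f b = y) =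
      pushSetoid f hf (EqvGen.setoid r) := by
  apply le_antisymm
  · exact Setoid.eqvGen_le fun x y ⟨a, b, h, ha, hb⟩ =>
      Or.inr ⟨a, b, EqvGen.rel a b h, ha, hb⟩
  · rintro x y (rfl | ⟨a, b, h, rfl, rfl⟩)
    · exact (EqvGen.setoid _).refl x
    · show EqvGen _ _ _
      induction h with
      | rel a b h => exact EqvGen.rel _ _ ⟨a, b, h, rfl, rfl⟩
      | refl a => exact EqvGen.refl _
      | symm _ _ _ ih => exact EqvGen.symm _ _ ih
      | trans _ _ _ _ _ ih1 ih2 => exact EqvGen.trans _ _ _ ih1 ih2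

theorem card_quot_push [Finite V] {α : Type} [Finite α] (f : α → V) (hf : Function.Injective f)
    (s : Setoid α) :
    Nat.card (Quotient (pushSetoid f hf s)) =
      Nat.card (Quotient s) + Nat.card ((Set.range f)ᶜ : Set V) := by
  symm
  rw [← Nat.card_sum]
  apply Nat.card_congr
  apply Equiv.ofBijective (Sum.elim
    (Quotient.lift (fun a => Quotient.mk (pushSetoid f hf s) (f a))
      (fun a b h => Quotient.sound (Or.inr ⟨a, b, h, rfl, rfl⟩)))
    (fun x => Quotient.mk _ x.val))
  constructor
  · rintro (q1 | ⟨x1, hx1⟩) (q2 | ⟨x2, hx2⟩) h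
    · obtain ⟨a, rfl⟩ := Quotient.exists_rep q1
      obtain ⟨b, rfl⟩ := Quotient.exists_rep q2
      simp only [Sum.elim_inl, Quotient.lift_mk] at h
      rcases Quotient.exact h with h | ⟨a', b', h', ha', hb'⟩
      · cases hf h
        rfl
      · cases hf ha'; cases hf hb'
        exact congrArg _ (Quotient.sound h')
    · obtain ⟨a, rfl⟩ := Quotient.exists_rep q1
      simp only [Sum.elim_inl, Sum.elim_inr, Quotient.lift_mk] at h
      rcases Quotient.exact h with h | ⟨a', b', _, _, hb'⟩
      · exact absurd ⟨a, h⟩ hx2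
      · exact absurd ⟨b', hb'⟩ hx2
    · obtain ⟨b, rfl⟩ := Quotient.exists_rep q2
      simp only [Sum.elim_inl, Sum.elim_inr, Quotient.lift_mk] at h
      rcases Quotient.exact h with h | ⟨a', b', _, ha', _⟩
      · exact absurd ⟨b, h.symm⟩ hx1
      · exact absurd ⟨a', ha'⟩ hx1
    · simp only [Sum.elim_inr] at h
      rcases Quotient.exact h with h | ⟨a', b', _, ha', _⟩
      · exact congrArg _ (Subtype.ext h)
      · exact absurd ⟨a', ha'⟩ hx1
  · intro q
    obtain ⟨x, rfl⟩ := Quotient.exists_rep q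
    by_cases hx : x ∈ Set.range f
    · obtain ⟨a, rfl⟩ := hx
      exact ⟨Sum.inl (Quotient.mk _ a), rfl⟩
    · exact ⟨Sum.inr ⟨x, hx⟩, rfl⟩

/-- Components of a projected relation on a quotient. -/
theorem card_quot_proj (e : Setoid V) (r : V → V → Prop) :
    Nat.card (Quotient (EqvGen.setoid (fun p q : Quotient e =>
        ∃ a b, r a b ∧ Quotient.mk e a = p ∧ Quotient.mk e b = q))) =
      Nat.card (Quotient (e ⊔ EqvGen.setoid r)) := by
  set pr : Quotient e → Quotient e → Prop := fun p q =>
    ∃ a b, r a b ∧ Quotient.mk e a = p ∧ Quotient.mk e b = q with hpr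
  have hle : (e ⊔ EqvGen.setoid r) ≤
      Setoid.comap (Quotient.mk e) (EqvGen.setoid pr) := by
    apply sup_le
    · intro x y h
      show EqvGen pr _ _
      rw [Quotient.sound h]
      exact EqvGen.refl _
    · apply Setoid.eqvGen_le
      intro x y h
      exact EqvGen.rel _ _ ⟨x, y, h, rfl, rfl⟩
  have hback : ∀ p q, EqvGen pr p q → ∀ x y, Quotient.mk e x = p → Quotient.mk e y = q →
      (e ⊔ EqvGen.setoid r) x y := by
    intro p q h
    induction h with
    | rel p q h =>
      intro x y hx hy
      obtain ⟨a, b, hab, ha, hb⟩ := h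
      have h1 : e x a := Quotient.exact (hx.trans ha.symm)
      have h2 : e b y := Quotient.exact (hb.trans hy.symm)
      have h3 : (e ⊔ EqvGen.setoid r) a b :=
        (le_sup_right : EqvGen.setoid r ≤ _) (EqvGen.rel _ _ hab)
      exact (e ⊔ EqvGen.setoid r).trans ((le_sup_left : e ≤ _) h1)
        ((e ⊔ EqvGen.setoid r).trans h3 ((le_sup_left : e ≤ _) h2))
    | refl p =>
      intro x y hx hy
      exact (le_sup_left : e ≤ _) (Quotient.exact (hx.trans hy.symm))
    | symm p q _ ih =>
      intro x y hx hy
      exact (e ⊔ EqvGen.setoid r).symm (ih y x hy hx)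
    | trans p q q' _ _ ih1 ih2 =>
      intro x y hx hy
      obtain ⟨z, rfl⟩ := Quotient.exists_rep q
      exact (e ⊔ EqvGen.setoid r).trans (ih1 x z hx rfl) (ih2 z y rfl hy)
  symm
  apply Nat.card_congr
  apply Equiv.ofBijective (Quotient.lift
    (fun x => Quotient.mk (EqvGen.setoid pr) (Quotient.mk e x))
    (fun x y h => Quotient.sound (hle h)))
  constructor
  · intro q1 q2 h
    obtain ⟨x, rfl⟩ := Quotient.exists_rep q1
    obtain ⟨y, rfl⟩ := Quotient.exists_rep q2
    simp only [Quotient.lift_mk] at h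
    exact Quotient.sound (hback _ _ (Quotient.exact h) x y rfl rfl)
  · intro q
    obtain ⟨p, rfl⟩ := Quotient.exists_rep q
    obtain ⟨x, rfl⟩ := Quotient.exists_rep p
    exact ⟨Quotient.mk _ x, rfl⟩

end SplitAux

section ABS

variable {V : Type}

/-- comap to a subset -/
abbrev comapU (s : Setoid V) (U : Set V) : Setoid U :=
  Setoid.comap (Subtype.val : U → V) s

variable (s1 s2 : Setoid V) (U R1 R2 : Set V)

/-- Explicit description of the join of two setoids with supports meeting in `U`. -/
def joinDesc : V → V → Prop := fun x y =>
  s1 x y ∨ s2 x y ∨ ∃ (u v : V) (hu : u ∈ U) (hv : v ∈ U),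
    (comapU s1 U ⊔ comapU s2 U) ⟨u, hu⟩ ⟨v, hv⟩ ∧
    (s1 x u ∨ s2 x u) ∧ (s1 y v ∨ s2 y v)

variable {s1 s2 U R1 R2}
variable (hs1 : ∀ x y, s1 x y → x = y ∨ (x ∈ R1 ∧ y ∈ R1))
variable (hs2 : ∀ x y, s2 x y → x = y ∨ (x ∈ R2 ∧ y ∈ R2))
variable (hUR1 : U ⊆ R1) (hUR2 : U ⊆ R2) (hRU : R1 ∩ R2 ⊆ U)

section
include hs1 hs2 hRU

private theorem mem_U_of_mid {x u v : V} (h1 : s1 x u) (h2 : s2 x v)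
    (hxu : x ≠ u) (hxv : x ≠ v) : x ∈ U := by
  rcases hs1 x u h1 with rfl | ⟨hx1, _⟩
  · exact absurd rfl hxu
  rcases hs2 x v h2 with rfl | ⟨hx2, _⟩
  · exact absurd rfl hxv
  exact hRU ⟨hx1, hx2⟩

private theorem helper1 {x u v : V} (hu : u ∈ U) (hv : v ∈ U)
    (h1 : s1 x u ∨ s2 x u) (h2 : s1 x v ∨ s2 x v) :
    (comapU s1 U ⊔ comapU s2 U) ⟨u, hu⟩ ⟨v, hv⟩ := by
  set M := comapU s1 U ⊔ comapU s2 U with hM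
  have hin1 : ∀ (a b : V) (ha : a ∈ U) (hb : b ∈ U), s1 a b → M ⟨a, ha⟩ ⟨b, hb⟩ :=
    fun a b ha hb h => (le_sup_left : comapU s1 U ≤ M) h
  have hin2 : ∀ (a b : V) (ha : a ∈ U) (hb : b ∈ U), s2 a b → M ⟨a, ha⟩ ⟨b, hb⟩ :=
    fun a b ha hb h => (le_sup_right : comapU s2 U ≤ M) h
  rcases h1 with h1 | h1 <;> rcases h2 with h2 | h2
  · exact hin1 u v hu hv (s1.trans (s1.symm h1) h2)
  · by_cases hxu : x = u
    · subst hxu; exact hin2 x v hu hv h2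
    by_cases hxv : x = v
    · subst hxv; exact hin1 u x hu hv (s1.symm h1)
    have hxU : x ∈ U := mem_U_of_mid hs1 hs2 hRU h1 h2 hxu hxv
    exact M.trans (hin1 u x hu hxU (s1.symm h1)) (hin2 x v hxU hv h2)
  · by_cases hxu : x = u
    · subst hxu; exact hin1 x v hu hv h2
    by_cases hxv : x = v
    · subst hxv; exact hin2 u x hu hv (s2.symm h1)
    have hxU : x ∈ U := mem_U_of_mid hs1 hs2 hRU h2 h1 hxv hxu
    exact M.trans (hin2 u x hu hxU (s2.symm h1)) (hin1 x v hxU hv h2)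
  · exact hin2 u v hu hv (s2.trans (s2.symm h1) h2)

private theorem helper2 {y z u : V} (hu : u ∈ U)
    (h1 : s1 y u ∨ s2 y u) (h2 : s1 y z ∨ s2 y z) :
    ∃ (w : V) (hw : w ∈ U), (comapU s1 U ⊔ comapU s2 U) ⟨u, hu⟩ ⟨w, hw⟩ ∧
      (s1 z w ∨ s2 z w) := by
  set M := comapU s1 U ⊔ comapU s2 U with hM
  have hin1 : ∀ (a b : V) (ha : a ∈ U) (hb : b ∈ U), s1 a b → M ⟨a, ha⟩ ⟨b, hb⟩ :=
    fun a b ha hb h => (le_sup_left : comapU s1 U ≤ M) h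
  have hin2 : ∀ (a b : V) (ha : a ∈ U) (hb : b ∈ U), s2 a b → M ⟨a, ha⟩ ⟨b, hb⟩ :=
    fun a b ha hb h => (le_sup_right : comapU s2 U ≤ M) h
  rcases h1 with h1 | h1 <;> rcases h2 with h2 | h2
  · exact ⟨u, hu, M.refl _, Or.inl (s1.trans (s1.symm h2) h1)⟩
  · by_cases hyz : y = z
    · subst hyz; exact ⟨u, hu, M.refl _, Or.inl h1⟩
    by_cases hyu : y = u
    · subst hyu; exact ⟨y, hu, M.refl _, Or.inr (s2.symm h2)⟩
    have hyU : y ∈ U := mem_U_of_mid hs1 hs2 hRU h1 h2 hyu hyz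
    exact ⟨y, hyU, hin1 u y hu hyU (s1.symm h1), Or.inr (s2.symm h2)⟩
  · by_cases hyz : y = z
    · subst hyz; exact ⟨u, hu, M.refl _, Or.inr h1⟩
    by_cases hyu : y = u
    · subst hyu; exact ⟨y, hu, M.refl _, Or.inl (s1.symm h2)⟩
    have hyU : y ∈ U := mem_U_of_mid hs1 hs2 hRU h2 h1 hyz hyu
    exact ⟨y, hyU, hin2 u y hu hyU (s2.symm h1), Or.inl (s1.symm h2)⟩
  · exact ⟨u, hu, M.refl _, Or.inr (s2.trans (s2.symm h2) h1)⟩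

/-- The explicit description is an equivalence relation. -/
def joinSetoid : Setoid V where
  r := joinDesc s1 s2 U
  iseqv := by
    constructor
    · exact fun x => Or.inl (s1.refl x)
    · rintro x y (h | h | ⟨u, v, hu, hv, hM, hx, hy⟩)
      · exact Or.inl (s1.symm h)
      · exact Or.inr (Or.inl (s2.symm h))
      · exact Or.inr (Or.inr ⟨v, u, hv, hu,
          (comapU s1 U ⊔ comapU s2 U).symm hM, hy, hx⟩)
    · set M := comapU s1 U ⊔ comapU s2 U with hMdef
      rintro x y z (h | h | ⟨u, v, hu, hv, hM, hx, hy⟩)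
        <;> rintro (h' | h' | ⟨u', v', hu', hv', hM', hy', hz'⟩)
      -- case s1 , s1
      · exact Or.inl (s1.trans h h')
      -- case s1 , s2
      · by_cases hyz : y = z
        · subst hyz; exact Or.inl h
        by_cases hxy : x = y
        · subst hxy; exact Or.inr (Or.inl h')
        have hyU : y ∈ U := mem_U_of_mid hs1 hs2 hRU (s1.symm h) h' (Ne.symm hxy) hyz
        exact Or.inr (Or.inr ⟨y, y, hyU, hyU, M.refl _, Or.inl h, Or.inr (s2.symm h')⟩)
      -- case s1 , third
      · obtain ⟨w, hw, hMw, hxw⟩ := helper2 hs1 hs2 hRU hu' hy' (Or.inl (s1.symm h))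
        exact Or.inr (Or.inr ⟨w, v', hw, hv', M.trans (M.symm hMw) hM', hxw, hz'⟩)
      -- case s2 , s1
      · by_cases hyz : y = z
        · subst hyz; exact Or.inr (Or.inl h)
        by_cases hxy : x = y
        · subst hxy; exact Or.inl h'
        have hyU : y ∈ U := mem_U_of_mid hs1 hs2 hRU h' (s2.symm h) hyz (Ne.symm hxy)
        exact Or.inr (Or.inr ⟨y, y, hyU, hyU, M.refl _, Or.inr h, Or.inl (s1.symm h')⟩)
      -- case s2 , s2
      · exact Or.inr (Or.inl (s2.trans h h'))
      -- case s2 , third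
      · obtain ⟨w, hw, hMw, hxw⟩ := helper2 hs1 hs2 hRU hu' hy' (Or.inr (s2.symm h))
        exact Or.inr (Or.inr ⟨w, v', hw, hv', M.trans (M.symm hMw) hM', hxw, hz'⟩)
      -- case third , s1
      · obtain ⟨w, hw, hMw, hzw⟩ := helper2 hs1 hs2 hRU hv hy (Or.inl h')
        exact Or.inr (Or.inr ⟨u, w, hu, hw, M.trans hM hMw, hx, hzw⟩)
      -- case third , s2
      · obtain ⟨w, hw, hMw, hzw⟩ := helper2 hs1 hs2 hRU hv hy (Or.inr h')
        exact Or.inr (Or.inr ⟨u, w, hu, hw, M.trans hM hMw, hx, hzw⟩)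
      -- case third , third
      · have hmid : M ⟨v, hv⟩ ⟨u', hu'⟩ := helper1 hs1 hs2 hRU hv hu' hy hy'
        exact Or.inr (Or.inr ⟨u, v', hu, hv', M.trans hM (M.trans hmid hM'), hx, hz'⟩)

theorem sup_eq_joinSetoid : s1 ⊔ s2 = joinSetoid hs1 hs2 hRU := by
  apply le_antisymm
  · apply sup_le
    · intro x y h; exact Or.inl h
    · intro x y h; exact Or.inr (Or.inl h)
  · intro x y h
    have hle1 : s1 ≤ s1 ⊔ s2 := le_sup_left
    have hle2 : s2 ≤ s1 ⊔ s2 := le_sup_right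
    rcases h with h | h | ⟨u, v, hu, hv, hM, hx, hy⟩
    · exact hle1 h
    · exact hle2 h
    · have hMle : (comapU s1 U ⊔ comapU s2 U) ≤ comapU (s1 ⊔ s2) U :=
        sup_le (Setoid.comap_mono' _ le_sup_left) (Setoid.comap_mono' _ le_sup_right)
      have huv : (s1 ⊔ s2) u v := hMle hM
      have hxu : (s1 ⊔ s2) x u := hx.elim (fun h => hle1 h) (fun h => hle2 h)
      have hyv : (s1 ⊔ s2) y v := hy.elim (fun h => hle1 h) (fun h => hle2 h)
      exact (s1 ⊔ s2).trans hxu ((s1 ⊔ s2).trans huv ((s1 ⊔ s2).symm hyv))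

/-- Restriction of the join to `U` is the join of the restrictions. -/
theorem comapU_sup : comapU (s1 ⊔ s2) U = comapU s1 U ⊔ comapU s2 U := by
  apply le_antisymm
  · rintro ⟨a, ha⟩ ⟨b, hb⟩ h
    have h' : joinDesc s1 s2 U a b := by
      rw [sup_eq_joinSetoid hs1 hs2 hRU] at h; exact h
    set M := comapU s1 U ⊔ comapU s2 U with hMdef
    rcases h' with h | h | ⟨u, v, hu, hv, hM, hx, hy⟩
    · exact (le_sup_left : comapU s1 U ≤ M) h
    · exact (le_sup_right : comapU s2 U ≤ M) h
    · have h1 : M ⟨u, hu⟩ ⟨a, ha⟩ := helper1 hs1 hs2 hRU hu ha hx (Or.inl (s1.refl a))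
      have h2 : M ⟨v, hv⟩ ⟨b, hb⟩ := helper1 hs1 hs2 hRU hv hb hy (Or.inl (s1.refl b))
      exact M.trans (M.symm h1) (M.trans hM h2)
  · exact sup_le (Setoid.comap_mono' _ le_sup_left) (Setoid.comap_mono' _ le_sup_right)

/-- If the `s1`-class of `x` is contained in `R1 \ U`, then its join class is its
`s1`-class. -/
theorem join_pure {x y : V} (hx : ∀ z, s1 x z → z ∈ R1 \ U) (h : (s1 ⊔ s2) x y) :
    s1 x y := by
  rw [sup_eq_joinSetoid hs1 hs2 hRU] at h
  rcases h with h | h | ⟨u, v, hu, hv, _, hxu, _⟩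
  · exact h
  · by_cases hxy : x = y
    · subst hxy; exact s1.refl x
    rcases hs2 x y h with rfl | ⟨hx2, _⟩
    · exact absurd rfl hxy
    have hx1 : x ∈ R1 \ U := hx x (s1.refl x)
    exact absurd (hRU ⟨hx1.1, hx2⟩) hx1.2
  · rcases hxu with hxu | hxu
    · exact absurd hu (hx u hxu).2
    · by_cases hxu' : x = u
      · subst hxu'; exact absurd hu (hx x (s1.refl x)).2
      rcases hs2 x u hxu with rfl | ⟨hx2, _⟩
      · exact absurd rfl hxu'
      have hx1 : x ∈ R1 \ U := hx x (s1.refl x)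
      exact absurd (hRU ⟨hx1.1, hx2⟩) hx1.2

end

section

variable [Finite V]

/-- Classes avoiding `U` split as classes inside `R \ U` plus singletons outside `R`. -/
theorem card_nomeet_split (s : Setoid V) (U R : Set V)
    (hs : ∀ x y, s x y → x = y ∨ (x ∈ R ∧ y ∈ R)) (hUR : U ⊆ R) :
    Nat.card {q : Quotient s // ¬ ∃ u : U, Quotient.mk s u.val = q} =
      Nat.card {q : Quotient s // ∀ z, Quotient.mk s z = q → z ∈ R \ U} +
        Nat.card (Rᶜ : Set V) := by
  symm
  rw [← Nat.card_sum]
  apply Nat.card_congr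
  apply Equiv.ofBijective (Sum.elim
    (fun p : {q : Quotient s // ∀ z, Quotient.mk s z = q → z ∈ R \ U} =>
      (⟨p.1, fun ⟨u, hu⟩ => (p.2 u.val hu).2 u.2⟩ :
        {q : Quotient s // ¬ ∃ u : U, Quotient.mk s u.val = q}))
    (fun p : (Rᶜ : Set V) =>
      ⟨Quotient.mk s p.val, fun ⟨u, hu⟩ => by
        rcases hs u.val p.val (Quotient.exact hu) with h | ⟨_, hp⟩
        · exact p.2 (h ▸ hUR u.2)
        · exact p.2 hp⟩))
  constructor
  · rintro (⟨q1, hq1⟩ | ⟨x1, hx1⟩) (⟨q2, hq2⟩ | ⟨x2, hx2⟩) h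
    · simp only [Sum.elim_inl, Subtype.mk.injEq] at h
      exact congrArg _ (Subtype.ext h)
    · simp only [Sum.elim_inl, Sum.elim_inr, Subtype.mk.injEq] at h
      exact absurd (hq1 x2 h.symm).1 hx2
    · simp only [Sum.elim_inl, Sum.elim_inr, Subtype.mk.injEq] at h
      exact absurd (hq2 x1 h).1 hx1
    · simp only [Sum.elim_inr, Subtype.mk.injEq] at h
      rcases hs x1 x2 (Quotient.exact h) with h' | ⟨h1, _⟩
      · exact congrArg _ (Subtype.ext h')
      · exact absurd h1 hx1
  · rintro ⟨q, hq⟩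
    obtain ⟨x, rfl⟩ := Quotient.exists_rep q
    by_cases hxR : x ∈ R
    · refine ⟨Sum.inl ⟨Quotient.mk s x, ?_⟩, rfl⟩
      intro z hz
      constructor
      · rcases hs z x (Quotient.exact hz) with rfl | ⟨h1, _⟩
        · exact hxR
        · exact h1
      · intro hzU
        exact hq ⟨⟨z, hzU⟩, hz⟩
    · exact ⟨Sum.inr ⟨x, hxR⟩, rfl⟩

theorem map_of_le_mk {s t : Setoid V} (h : s ≤ t) (x : V) :
    Setoid.map_of_le h (Quotient.mk s x) = Quotient.mk t x := rfl

include hs1 hs2 hUR1 hUR2 hRU in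
/-- Join classes avoiding `U` are classes of one of the two sides. -/
theorem card_nomeet_join (hcov : R1 ∪ R2 = Set.univ) :
    Nat.card {q : Quotient (s1 ⊔ s2) // ¬ ∃ u : U, Quotient.mk (s1 ⊔ s2) u.val = q} =
      Nat.card {q : Quotient s1 // ∀ z, Quotient.mk s1 z = q → z ∈ R1 \ U} +
        Nat.card {q : Quotient s2 // ∀ z, Quotient.mk s2 z = q → z ∈ R2 \ U} := by
  have hs1' : ∀ x y, s2 x y → x = y ∨ (x ∈ R2 ∧ y ∈ R2) := hs2
  have hRU' : R2 ∩ R1 ⊆ U := fun x hx => hRU ⟨hx.2, hx.1⟩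
  have pure1 : ∀ x (hx : ∀ z, Quotient.mk s1 z = Quotient.mk s1 x → z ∈ R1 \ U)
      {y : V}, (s1 ⊔ s2) x y → s1 x y := by
    intro x hx y h
    exact join_pure hs1 hs2 hRU (fun z hz => hx z (Quotient.sound (s1.symm hz))) h
  have pure2 : ∀ x (hx : ∀ z, Quotient.mk s2 z = Quotient.mk s2 x → z ∈ R2 \ U)
      {y : V}, (s2 ⊔ s1) x y → s2 x y := by
    intro x hx y h
    exact join_pure hs2 hs1 hRU' (fun z hz => hx z (Quotient.sound (s2.symm hz))) h
  have pure2' : ∀ x (hx : ∀ z, Quotient.mk s2 z = Quotient.mk s2 x → z ∈ R2 \ U)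
      {y : V}, (s1 ⊔ s2) x y → s2 x y := by
    intro x hx y h
    exact pure2 x hx (by rwa [sup_comm] at h)
  symm
  rw [← Nat.card_sum]
  apply Nat.card_congr
  have wd1 : ∀ (q : Quotient s1), (∀ z, Quotient.mk s1 z = q → z ∈ R1 \ U) →
      ¬ ∃ u : U, Quotient.mk (s1 ⊔ s2) u.val = Setoid.map_of_le (le_sup_left : s1 ≤ s1 ⊔ s2) q := by
    intro q hq
    obtain ⟨x, rfl⟩ := Quotient.exists_rep q
    rintro ⟨u, hu⟩
    rw [map_of_le_mk] at hu
    have h : (s1 ⊔ s2) x u.val := (s1 ⊔ s2).symm (Quotient.exact hu)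
    have := pure1 x hq h
    exact (hq u.val (Quotient.sound (s1.symm this))).2 u.2
  have wd2 : ∀ (q : Quotient s2), (∀ z, Quotient.mk s2 z = q → z ∈ R2 \ U) →
      ¬ ∃ u : U, Quotient.mk (s1 ⊔ s2) u.val = Setoid.map_of_le (le_sup_right : s2 ≤ s1 ⊔ s2) q := by
    intro q hq
    obtain ⟨x, rfl⟩ := Quotient.exists_rep q
    rintro ⟨u, hu⟩
    rw [map_of_le_mk] at hu
    have h : (s1 ⊔ s2) x u.val := (s1 ⊔ s2).symm (Quotient.exact hu)
    have := pure2' x hq h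
    exact (hq u.val (Quotient.sound (s2.symm this))).2 u.2
  apply Equiv.ofBijective (Sum.elim
    (fun p : {q : Quotient s1 // ∀ z, Quotient.mk s1 z = q → z ∈ R1 \ U} =>
      (⟨Setoid.map_of_le le_sup_left p.1, wd1 p.1 p.2⟩ :
        {q : Quotient (s1 ⊔ s2) // ¬ ∃ u : U, Quotient.mk (s1 ⊔ s2) u.val = q}))
    (fun p : {q : Quotient s2 // ∀ z, Quotient.mk s2 z = q → z ∈ R2 \ U} =>
      ⟨Setoid.map_of_le le_sup_right p.1, wd2 p.1 p.2⟩))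
  constructor
  · rintro (⟨q1, hq1⟩ | ⟨q1, hq1⟩) (⟨q2, hq2⟩ | ⟨q2, hq2⟩) h <;>
      obtain ⟨a, rfl⟩ := Quotient.exists_rep q1 <;>
      obtain ⟨b, rfl⟩ := Quotient.exists_rep q2 <;>
      simp only [Sum.elim_inl, Sum.elim_inr, Subtype.mk.injEq, map_of_le_mk] at h
    · exact congrArg _ (Subtype.ext (Quotient.sound (pure1 a hq1 (Quotient.exact h))))
    · have hab : s1 a b := pure1 a hq1 (Quotient.exact h)
      have h1 : b ∈ R1 \ U := hq1 b (Quotient.sound (s1.symm hab))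
      have h2 : b ∈ R2 \ U := hq2 b rfl
      exact absurd (hRU ⟨h1.1, h2.1⟩) h1.2
    · have hab : s2 a b := pure2' a hq1 (Quotient.exact h)
      have h1 : b ∈ R2 \ U := hq1 b (Quotient.sound (s2.symm hab))
      have h2 : b ∈ R1 \ U := hq2 b rfl
      exact absurd (hRU ⟨h2.1, h1.1⟩) h1.2
    · exact congrArg _ (Subtype.ext (Quotient.sound (pure2' a hq1 (Quotient.exact h))))
  · rintro ⟨q, hq⟩
    obtain ⟨x, rfl⟩ := Quotient.exists_rep q
    have hx : x ∈ R1 ∪ R2 := hcov ▸ Set.mem_univ x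
    by_cases hx1 : x ∈ R1
    · refine ⟨Sum.inl ⟨Quotient.mk s1 x, ?_⟩,
        Subtype.ext (map_of_le_mk (le_sup_left : s1 ≤ s1 ⊔ s2) x)⟩
      intro z hz
      have hzx : s1 z x := Quotient.exact hz
      constructor
      · rcases hs1 z x hzx with rfl | ⟨h1, _⟩
        · exact hx1
        · exact h1
      · intro hzU
        exact hq ⟨⟨z, hzU⟩, Quotient.sound ((le_sup_left : s1 ≤ s1 ⊔ s2) hzx)⟩
    · have hx2 : x ∈ R2 := hx.resolve_left hx1
      refine ⟨Sum.inr ⟨Quotient.mk s2 x, ?_⟩,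
        Subtype.ext (map_of_le_mk (le_sup_right : s2 ≤ s1 ⊔ s2) x)⟩
      intro z hz
      have hzx : s2 z x := Quotient.exact hz
      constructor
      · rcases hs2 z x hzx with rfl | ⟨h1, _⟩
        · exact hx2
        · exact h1
      · intro hzU
        exact hq ⟨⟨z, hzU⟩, Quotient.sound ((le_sup_right : s2 ≤ s1 ⊔ s2) hzx)⟩

include hs1 hs2 hUR1 hUR2 hRU in
/-- The master counting identity for the join of two setoids with supports `R1`, `R2`. -/
theorem abs_card (hcov : R1 ∪ R2 = Set.univ) :
    Nat.card (Quotient (s1 ⊔ s2)) +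
        (Nat.card (Quotient (Setoid.comap (Subtype.val : U → V) s1)) +
          Nat.card (R1ᶜ : Set V)) +
        (Nat.card (Quotient (Setoid.comap (Subtype.val : U → V) s2)) +
          Nat.card (R2ᶜ : Set V)) =
      Nat.card (Quotient s1) + Nat.card (Quotient s2) +
        Nat.card (Quotient (Setoid.comap (Subtype.val : U → V) s1 ⊔
          Setoid.comap (Subtype.val : U → V) s2)) := by
  have h1 := card_quot_split s1 U
  have hA1 := card_nomeet_split s1 U R1 hs1 hUR1
  have h2 := card_quot_split s2 U
  have hA2 := card_nomeet_split s2 U R2 hs2 hUR2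
  have hj := card_quot_split (s1 ⊔ s2) U
  have hC := card_nomeet_join hs1 hs2 hUR1 hUR2 hRU hcov
  have hcs : Setoid.comap (Subtype.val : U → V) (s1 ⊔ s2) =
      Setoid.comap (Subtype.val : U → V) s1 ⊔ Setoid.comap (Subtype.val : U → V) s2 :=
    comapU_sup hs1 hs2 hRU
  rw [hcs] at hj
  omega

end

end ABS



section PartB

open Relation

/-- Sym2.map equation characterization. -/
theorem Sym2.map_eq_mk_iff {α β : Type*} (f : α → β) (z : Sym2 α) (p q : β) :
    Sym2.map f z = s(p, q) ↔ ∃ a b, z = s(a, b) ∧ f a = p ∧ f b = q := by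
  induction z using Sym2.ind with
  | _ u v =>
    rw [Sym2.map_pair_eq, Sym2.eq_iff]
    constructor
    · rintro (⟨rfl, rfl⟩ | ⟨rfl, rfl⟩)
      · exact ⟨u, v, rfl, rfl, rfl⟩
      · exact ⟨v, u, Sym2.eq_swap, rfl, rfl⟩
    · rintro ⟨a, b, hab, rfl, rfl⟩
      rcases Sym2.eq_iff.1 hab with ⟨rfl, rfl⟩ | ⟨rfl, rfl⟩
      · exact Or.inl ⟨rfl, rfl⟩
      · exact Or.inr ⟨rfl, rfl⟩

namespace Multigraph

variable (G : Multigraph)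

theorem omega_mono {S T : Finset G.E} (h : S ⊆ T) : G.omega T ≤ G.omega S :=
  card_quot_le_of_le (Setoid.eqvGen_mono fun v w ⟨e, he, hew⟩ => ⟨e, h he, hew⟩)

theorem omega_insert_ge (S : Finset G.E) (e : G.E) :
    G.omega S ≤ G.omega (insert e S) + 1 := by
  obtain ⟨a, b, hab⟩ : ∃ a b, G.ends e = s(a, b) :=
    Sym2.ind (fun a b => ⟨a, b, rfl⟩) (G.ends e)
  have hrel : G.rel (insert e S) = fun v w =>
      G.rel S v w ∨ ((v = a ∧ w = b) ∨ (v = b ∧ w = a)) := by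
    funext v w
    apply propext
    constructor
    · rintro ⟨g, hg, hend⟩
      rcases Finset.mem_insert.1 hg with rfl | hg
      · rw [hab] at hend
        exact Or.inr (by
          rcases Sym2.eq_iff.1 hend with ⟨rfl, rfl⟩ | ⟨rfl, rfl⟩
          · exact Or.inl ⟨rfl, rfl⟩
          · exact Or.inr ⟨rfl, rfl⟩)
      · exact Or.inl ⟨g, hg, hend⟩
    · rintro (⟨g, hg, hend⟩ | (⟨rfl, rfl⟩ | ⟨rfl, rfl⟩))
      · exact ⟨g, Finset.mem_insert_of_mem hg, hend⟩
      · exact ⟨e, Finset.mem_insert_self e S, hab⟩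
      · exact ⟨e, Finset.mem_insert_self e S, by rw [hab, Sym2.eq_swap]⟩
  show Nat.card (Quotient (EqvGen.setoid (G.rel S))) ≤
    Nat.card (Quotient (EqvGen.setoid (G.rel (insert e S)))) + 1
  rw [hrel, eqvGen_or,
    sup_pair_eq (EqvGen.setoid (G.rel S)) a b (fun v w => Iff.rfl)]
  exact card_quot_le_pairJoin _ a b

theorem card_le_omega_add (S : Finset G.E) :
    Fintype.card G.V ≤ G.omega S + S.card := by
  induction S using Finset.induction_on with
  | empty =>
    have h0 : G.omega ∅ = Nat.card G.V :=
      card_quot_eqvGen_false (by rintro x y ⟨e, he, _⟩; exact (Finset.notMem_empty e) he)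
    rw [h0, Nat.card_eq_fintype_card]
    simp
  | @insert e S' he ih =>
    calc Fintype.card G.V ≤ G.omega S' + S'.card := ih
      _ ≤ (G.omega (insert e S') + 1) + S'.card :=
          Nat.add_le_add_right (G.omega_insert_ge S' e) _
      _ = G.omega (insert e S') + (insert e S').card := by
          rw [Finset.card_insert_of_notMem he]; omega

theorem omegaG_le (S : Finset G.E) : G.omegaG ≤ G.omega S :=
  G.omega_mono (Finset.subset_univ S)

end Multigraph

/-- The restriction of the extension of `C` back to `U` is `C`. -/
theorem comap_extendSetoid {V : Type} (U : Set V) (C : Setoid U) :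
    Setoid.comap (Subtype.val : U → V) (extendSetoid U C) = C := by
  apply Setoid.ext
  intro u w
  constructor
  · rintro (h | ⟨hu, hw, h⟩)
    · rw [Subtype.ext h]
    · exact h
  · intro h
    exact Or.inr ⟨u.2, w.2, h⟩

theorem card_quot_extendSetoid {V : Type} [Finite V] (U : Set V) (C : Setoid U) :
    Nat.card (Quotient (extendSetoid U C)) + Nat.card U =
      Nat.card V + Nat.card (Quotient C) := by
  have h := card_quot_split (extendSetoid U C) U
  have hs : ∀ x y, (extendSetoid U C) x y → x = y ∨ (x ∈ U ∧ y ∈ U) := by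
    rintro x y (rfl | ⟨hx, hy, _⟩)
    · exact Or.inl rfl
    · exact Or.inr ⟨hx, hy⟩
  have hA := card_nomeet_split (extendSetoid U C) U U hs le_rfl
  have hempty : Nat.card {q : Quotient (extendSetoid U C) //
      ∀ z, Quotient.mk (extendSetoid U C) z = q → z ∈ U \ U} = 0 := by
    have : IsEmpty {q : Quotient (extendSetoid U C) //
        ∀ z, Quotient.mk (extendSetoid U C) z = q → z ∈ U \ U} := by
      constructor
      rintro ⟨q, hq⟩
      obtain ⟨z, rfl⟩ := Quotient.exists_rep q
      exact (hq z rfl).2 (hq z rfl).1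
    exact Nat.card_of_isEmpty
  have hcompl : Nat.card (Uᶜ : Set V) + Nat.card U = Nat.card V := by
    rw [Nat.card_coe_set_eq, Nat.card_coe_set_eq, add_comm,
      Set.ncard_add_ncard_compl]
  rw [comap_extendSetoid] at h
  omega

/-- The relation of the contracted multigraph is the projected relation. -/
theorem Multigraph.contract_rel (K : Multigraph) {U : Set K.V} (C : Setoid U)
    (S : Finset K.E) :
    (K.contract C).rel S = fun p q => ∃ a b, K.rel S a b ∧
      Quotient.mk (extendSetoid U C) a = p ∧ Quotient.mk (extendSetoid U C) b = q := by
  funext p q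
  apply propext
  constructor
  · rintro ⟨e, he, hend⟩
    have hend' : Sym2.map (Quotient.mk (extendSetoid U C)) (K.ends e) = s(p, q) := hend
    obtain ⟨a, b, hab, hp, hq⟩ := (Sym2.map_eq_mk_iff _ _ _ _).1 hend'
    exact ⟨a, b, ⟨e, he, hab⟩, hp, hq⟩
  · rintro ⟨a, b, ⟨e, he, hab⟩, hp, hq⟩
    refine ⟨e, he, ?_⟩
    show Sym2.map (Quotient.mk (extendSetoid U C)) (K.ends e) = s(p, q)
    rw [hab, Sym2.map_pair_eq, hp, hq]
    rfl

theorem Multigraph.contract_omega (K : Multigraph) {U : Set K.V} (C : Setoid U)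
    (S : Finset K.E) :
    (K.contract C).omega S =
      Nat.card (Quotient (extendSetoid U C ⊔ EqvGen.setoid (K.rel S))) := by
  show Nat.card (Quotient (EqvGen.setoid ((K.contract C).rel S))) = _
  rw [Multigraph.contract_rel]
  exact card_quot_proj _ _

/-- Contraction formula for component counts. -/
theorem Multigraph.contract_omega_eq (K : Multigraph) {U : Set K.V} (C : Setoid U)
    (S : Finset K.E) :
    (K.contract C).omega S + nblocks (K.part U S) =
      K.omega S + nblocks (K.part U S ⊔ C) := by
  have hs1 : ∀ x y, (EqvGen.setoid (K.rel S)) x y →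
      x = y ∨ (x ∈ (Set.univ : Set K.V) ∧ y ∈ (Set.univ : Set K.V)) :=
    fun x y _ => Or.inr ⟨trivial, trivial⟩
  have hs2 : ∀ x y, (extendSetoid U C) x y → x = y ∨ (x ∈ U ∧ y ∈ U) := by
    rintro x y (rfl | ⟨hx, hy, _⟩)
    · exact Or.inl rfl
    · exact Or.inr ⟨hx, hy⟩
  have habs := abs_card hs1 hs2 (Set.subset_univ U) le_rfl
    (fun x hx => hx.2) (Set.univ_union U)
  have hocc : Nat.card ((Set.univ : Set K.V)ᶜ : Set K.V) = 0 := by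
    simp [Set.compl_univ]
  have hpart : Setoid.comap (Subtype.val : U → K.V) (EqvGen.setoid (K.rel S)) =
      K.part U S := rfl
  rw [hpart, comap_extendSetoid] at habs
  have hco : (K.contract C).omega S =
      Nat.card (Quotient (EqvGen.setoid (K.rel S) ⊔ extendSetoid U C)) := by
    rw [K.contract_omega C S, sup_comm]
  have hext := card_quot_extendSetoid U C
  have hcompl : Nat.card (Uᶜ : Set K.V) + Nat.card U = Nat.card K.V := by
    rw [Nat.card_coe_set_eq, Nat.card_coe_set_eq, add_comm,
      Set.ncard_add_ncard_compl]
  have homega : K.omega S = Nat.card (Quotient (EqvGen.setoid (K.rel S))) := rfl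
  have hnb1 : nblocks (K.part U S) = Nat.card (Quotient (K.part U S)) := rfl
  have hnb2 : nblocks (K.part U S ⊔ C) = Nat.card (Quotient (K.part U S ⊔ C)) := rfl
  omega

/-- `|V(K/C)|` in terms of `|V(K)|` and `|C|`. -/
theorem Multigraph.card_contract (K : Multigraph) {U : Set K.V} (C : Setoid U) :
    Fintype.card (K.contract C).V + Nat.card U = Fintype.card K.V + nblocks C := by
  have h := card_quot_extendSetoid U C
  have h1 : Fintype.card (K.contract C).V =
      Nat.card (Quotient (extendSetoid U C)) := (Nat.card_eq_fintype_card).symm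
  have h2 : Fintype.card K.V = Nat.card K.V := (Nat.card_eq_fintype_card).symm
  have h3 : nblocks C = Nat.card (Quotient C) := rfl
  omega

/-- Setoid comap along composition. -/
theorem Setoid.comap_comap {α β γ : Type*} (f : α → β) (g : β → γ) (s : Setoid γ) :
    Setoid.comap f (Setoid.comap g s) = Setoid.comap (g ∘ f) s := rfl

theorem comap_equiv_comap_symm {α β : Type*} (e : α ≃ β) (s : Setoid β) :
    Setoid.comap (⇑e.symm) (Setoid.comap (⇑e) s) = s := by
  apply Setoid.ext
  intro x y
  show s (e (e.symm x)) (e (e.symm y)) ↔ s x y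
  rw [Equiv.apply_symm_apply, Equiv.apply_symm_apply]

theorem comap_equiv_inj {α β : Type*} (e : α ≃ β) {s t : Setoid β}
    (h : Setoid.comap (⇑e) s = Setoid.comap (⇑e) t) : s = t := by
  have := congrArg (Setoid.comap (⇑e.symm)) h
  rwa [comap_equiv_comap_symm, comap_equiv_comap_symm] at this

theorem nblocks_comap_equiv {α β : Type} (e : α ≃ β) (s : Setoid β) :
    nblocks (Setoid.comap (⇑e) s) = nblocks s :=
  Nat.card_congr (Quotient.congr e (fun _ _ => Iff.rfl))

theorem comap_equiv_sup {α β : Type*} (e : α ≃ β) (s t : Setoid β) :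
    Setoid.comap (⇑e) (s ⊔ t) = Setoid.comap (⇑e) s ⊔ Setoid.comap (⇑e) t := by
  apply le_antisymm
  · have hle : s ⊔ t ≤ Setoid.comap (⇑e.symm)
        (Setoid.comap (⇑e) s ⊔ Setoid.comap (⇑e) t) := by
      apply sup_le
      · intro z w h
        refine (le_sup_left : Setoid.comap (⇑e) s ≤ _) ?_
        show s (e (e.symm z)) (e (e.symm w))
        rwa [Equiv.apply_symm_apply, Equiv.apply_symm_apply]
      · intro z w h
        refine (le_sup_right : Setoid.comap (⇑e) t ≤ _) ?_
        show t (e (e.symm z)) (e (e.symm w))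
        rwa [Equiv.apply_symm_apply, Equiv.apply_symm_apply]
    intro x y h
    have h2 := hle h
    show (Setoid.comap (⇑e) s ⊔ Setoid.comap (⇑e) t) x y
    have h3 : (Setoid.comap (⇑e) s ⊔ Setoid.comap (⇑e) t) (e.symm (e x)) (e.symm (e y)) := h2
    rwa [Equiv.symm_apply_apply, Equiv.symm_apply_apply] at h3
  · exact sup_le (Setoid.comap_mono' _ le_sup_left) (Setoid.comap_mono' _ le_sup_right)

end PartB



section PartBN

open Relation

namespace NSum

variable {G K H : Multigraph} {U : Set G.V} (sg : NSum G K H U)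

theorem subU_K : U ⊆ Set.range sg.ιK := by
  intro x hx
  rw [← sg.inter] at hx
  exact hx.1

theorem subU_H : U ⊆ Set.range sg.ιH := by
  intro x hx
  rw [← sg.inter] at hx
  exact hx.2

/-- The `K`-side of the partition of `V(G)` induced by an edge subset. -/
def sK (P : Finset K.E) : Setoid G.V :=
  pushSetoid sg.ιK sg.injK (EqvGen.setoid (K.rel P))

def sH (Q : Finset H.E) : Setoid G.V :=
  pushSetoid sg.ιH sg.injH (EqvGen.setoid (H.rel Q))

/-- The partition of `U` induced by an edge subset of `K`. -/
def AS (P : Finset K.E) : Setoid ↥U := Setoid.comap Subtype.val (sg.sK P)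

def BS (Q : Finset H.E) : Setoid ↥U := Setoid.comap Subtype.val (sg.sH Q)

/-- The identification of `ιK ⁻¹' U` with `U`. -/
noncomputable def eqK : ↥(sg.ιK ⁻¹' U : Set K.V) ≃ ↥U := by
  apply Equiv.ofBijective (fun v => (⟨sg.ιK v.1, v.2⟩ : ↥U))
  constructor
  · intro v w h
    exact Subtype.ext (sg.injK (congrArg Subtype.val h))
  · intro u
    obtain ⟨k, hk⟩ := sg.subU_K u.2
    exact ⟨⟨k, by rw [Set.mem_preimage, hk]; exact u.2⟩, Subtype.ext hk⟩

noncomputable def eqH : ↥(sg.ιH ⁻¹' U : Set H.V) ≃ ↥U := by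
  apply Equiv.ofBijective (fun v => (⟨sg.ιH v.1, v.2⟩ : ↥U))
  constructor
  · intro v w h
    exact Subtype.ext (sg.injH (congrArg Subtype.val h))
  · intro u
    obtain ⟨k, hk⟩ := sg.subU_H u.2
    exact ⟨⟨k, by rw [Set.mem_preimage, hk]; exact u.2⟩, Subtype.ext hk⟩

theorem pullK_eq (A : Setoid ↥U) : sg.pullK A = Setoid.comap (⇑sg.eqK) A := rfl

theorem pullH_eq (B : Setoid ↥U) : sg.pullH B = Setoid.comap (⇑sg.eqH) B := rfl

theorem comap_eqK_AS (P : Finset K.E) :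
    Setoid.comap (⇑sg.eqK) (sg.AS P) = K.part (sg.ιK ⁻¹' U) P := by
  apply Setoid.ext
  intro v w
  show (sg.sK P) (sg.ιK v.1) (sg.ιK w.1) ↔ (EqvGen.setoid (K.rel P)) v.1 w.1
  constructor
  · rintro (h | ⟨a, b, hab, ha, hb⟩)
    · have h2 : v.1 = w.1 := sg.injK h
      rw [h2]
    · cases sg.injK ha
      cases sg.injK hb
      exact hab
  · intro h
    exact Or.inr ⟨v.1, w.1, h, rfl, rfl⟩

theorem comap_eqH_BS (Q : Finset H.E) :
    Setoid.comap (⇑sg.eqH) (sg.BS Q) = H.part (sg.ιH ⁻¹' U) Q := by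
  apply Setoid.ext
  intro v w
  show (sg.sH Q) (sg.ιH v.1) (sg.ιH w.1) ↔ (EqvGen.setoid (H.rel Q)) v.1 w.1
  constructor
  · rintro (h | ⟨a, b, hab, ha, hb⟩)
    · have h2 : v.1 = w.1 := sg.injH h
      rw [h2]
    · cases sg.injH ha
      cases sg.injH hb
      exact hab
  · intro h
    exact Or.inr ⟨v.1, w.1, h, rfl, rfl⟩

theorem AS_eq_iff (P : Finset K.E) (A : Setoid ↥U) :
    K.part (sg.ιK ⁻¹' U) P = sg.pullK A ↔ sg.AS P = A := by
  constructor
  · intro h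
    apply comap_equiv_inj sg.eqK
    rw [comap_eqK_AS, h, pullK_eq]
  · rintro rfl
    rw [← comap_eqK_AS, pullK_eq]

theorem BS_eq_iff (Q : Finset H.E) (B : Setoid ↥U) :
    H.part (sg.ιH ⁻¹' U) Q = sg.pullH B ↔ sg.BS Q = B := by
  constructor
  · intro h
    apply comap_equiv_inj sg.eqH
    rw [comap_eqH_BS, h, pullH_eq]
  · rintro rfl
    rw [← comap_eqH_BS, pullH_eq]

/-- Contraction formula transported to partitions of `U`, `K`-side. -/
theorem contractK_omega (A : Setoid ↥U) (P : Finset K.E) :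
    (sg.contractK A).omega P + nblocks (sg.AS P) =
      K.omega P + nblocks (sg.AS P ⊔ A) := by
  have h := K.contract_omega_eq (sg.pullK A) P
  have h1 : nblocks (K.part (sg.ιK ⁻¹' U) P) = nblocks (sg.AS P) := by
    rw [← comap_eqK_AS, nblocks_comap_equiv]
  have h2 : nblocks (K.part (sg.ιK ⁻¹' U) P ⊔ sg.pullK A) = nblocks (sg.AS P ⊔ A) := by
    rw [← comap_eqK_AS, pullK_eq, ← comap_equiv_sup, nblocks_comap_equiv]
  rw [h1, h2] at h
  exact h

theorem contractH_omega (B : Setoid ↥U) (Q : Finset H.E) :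
    (sg.contractH B).omega Q + nblocks (sg.BS Q) =
      H.omega Q + nblocks (sg.BS Q ⊔ B) := by
  have h := H.contract_omega_eq (sg.pullH B) Q
  have h1 : nblocks (H.part (sg.ιH ⁻¹' U) Q) = nblocks (sg.BS Q) := by
    rw [← comap_eqH_BS, nblocks_comap_equiv]
  have h2 : nblocks (H.part (sg.ιH ⁻¹' U) Q ⊔ sg.pullH B) = nblocks (sg.BS Q ⊔ B) := by
    rw [← comap_eqH_BS, pullH_eq, ← comap_equiv_sup, nblocks_comap_equiv]
  rw [h1, h2] at h
  exact h

/-- `|V(K/A)|`, transported. -/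
theorem card_contractK (A : Setoid ↥U) :
    Fintype.card (sg.contractK A).V + Nat.card ↥U =
      Fintype.card K.V + nblocks A := by
  have h := K.card_contract (sg.pullK A)
  have h1 : Nat.card ↥(sg.ιK ⁻¹' U : Set K.V) = Nat.card ↥U := Nat.card_congr sg.eqK
  have h2 : nblocks (sg.pullK A) = nblocks A := by
    rw [pullK_eq, nblocks_comap_equiv]
  rw [h1, h2] at h
  exact h

theorem card_contractH (B : Setoid ↥U) :
    Fintype.card (sg.contractH B).V + Nat.card ↥U =
      Fintype.card H.V + nblocks B := by
  have h := H.card_contract (sg.pullH B)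
  have h1 : Nat.card ↥(sg.ιH ⁻¹' U : Set H.V) = Nat.card ↥U := Nat.card_congr sg.eqH
  have h2 : nblocks (sg.pullH B) = nblocks B := by
    rw [pullH_eq, nblocks_comap_equiv]
  rw [h1, h2] at h
  exact h

include sg in
/-- `|V(G)| + n = |V(K)| + |V(H)|`. -/
theorem card_V_G :
    Fintype.card G.V + Nat.card ↥U = Fintype.card K.V + Fintype.card H.V := by
  have h := Set.ncard_union_add_ncard_inter (Set.range sg.ιK) (Set.range sg.ιH)
    (Set.toFinite _) (Set.toFinite _)
  rw [sg.cover, sg.inter, Set.ncard_univ] at h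
  have h1 : (Set.range sg.ιK).ncard = Nat.card K.V := by
    rw [← Nat.card_coe_set_eq]
    exact Nat.card_congr (Equiv.ofInjective _ sg.injK).symm
  have h2 : (Set.range sg.ιH).ncard = Nat.card H.V := by
    rw [← Nat.card_coe_set_eq]
    exact Nat.card_congr (Equiv.ofInjective _ sg.injH).symm
  rw [h1, h2, ← Nat.card_coe_set_eq] at h
  have hg : Fintype.card G.V = Nat.card G.V := (Nat.card_eq_fintype_card).symm
  have hk2 : Fintype.card K.V = Nat.card K.V := (Nat.card_eq_fintype_card).symm
  have hh2 : Fintype.card H.V = Nat.card H.V := (Nat.card_eq_fintype_card).symm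
  omega

/-- The edge subsets of `G` correspond to pairs of edge subsets of `K` and `H`. -/
noncomputable def edgeFE : Finset K.E × Finset H.E ≃ Finset G.E :=
  Equiv.trans
    { toFun := fun PQ => PQ.1.disjSum PQ.2
      invFun := fun S => (S.toLeft, S.toRight)
      left_inv := fun PQ => by simp
      right_inv := fun S => Finset.toLeft_disjSum_toRight }
    sg.edgeEquiv.finsetCongr.symm

theorem mem_edgeFE (P : Finset K.E) (Q : Finset H.E) (g : G.E) :
    g ∈ sg.edgeFE (P, Q) ↔ sg.edgeEquiv g ∈ P.disjSum Q := by
  simp [edgeFE, Equiv.finsetCongr_symm, Equiv.finsetCongr_apply, Finset.mem_map_equiv]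

theorem card_edgeFE (P : Finset K.E) (Q : Finset H.E) :
    (sg.edgeFE (P, Q)).card = P.card + Q.card := by
  simp [edgeFE, Equiv.finsetCongr_symm, Equiv.finsetCongr_apply, Finset.card_map]

theorem rel_edgeFE (P : Finset K.E) (Q : Finset H.E) :
    G.rel (sg.edgeFE (P, Q)) = fun x y =>
      (∃ a b, K.rel P a b ∧ sg.ιK a = x ∧ sg.ιK b = y) ∨
      (∃ a b, H.rel Q a b ∧ sg.ιH a = x ∧ sg.ιH b = y) := by
  funext x y
  apply propext
  constructor
  · rintro ⟨g, hg, hend⟩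
    rw [sg.mem_edgeFE] at hg
    rcases hsum : sg.edgeEquiv g with a | b
    · left
      have hgeq : g = sg.edgeEquiv.symm (Sum.inl a) := by rw [← hsum]; simp
      rw [hgeq, sg.endsK] at hend
      obtain ⟨u, v, huv, hu, hv⟩ := (Sym2.map_eq_mk_iff _ _ _ _).1 hend
      have ha : a ∈ P := by rwa [hsum, Finset.inl_mem_disjSum] at hg
      exact ⟨u, v, ⟨a, ha, huv⟩, hu, hv⟩
    · right
      have hgeq : g = sg.edgeEquiv.symm (Sum.inr b) := by rw [← hsum]; simp
      rw [hgeq, sg.endsH] at hend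
      obtain ⟨u, v, huv, hu, hv⟩ := (Sym2.map_eq_mk_iff _ _ _ _).1 hend
      have hb : b ∈ Q := by rwa [hsum, Finset.inr_mem_disjSum] at hg
      exact ⟨u, v, ⟨b, hb, huv⟩, hu, hv⟩
  · rintro (⟨u, v, ⟨a, ha, huv⟩, hu, hv⟩ | ⟨u, v, ⟨b, hb, huv⟩, hu, hv⟩)
    · refine ⟨sg.edgeEquiv.symm (Sum.inl a), ?_, ?_⟩
      · rw [sg.mem_edgeFE]
        simp [Finset.inl_mem_disjSum, ha]
      · rw [sg.endsK, huv, Sym2.map_pair_eq, hu, hv]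
    · refine ⟨sg.edgeEquiv.symm (Sum.inr b), ?_, ?_⟩
      · rw [sg.mem_edgeFE]
        simp [Finset.inr_mem_disjSum, hb]
      · rw [sg.endsH, huv, Sym2.map_pair_eq, hu, hv]

theorem setoid_edgeFE (P : Finset K.E) (Q : Finset H.E) :
    EqvGen.setoid (G.rel (sg.edgeFE (P, Q))) = sg.sK P ⊔ sg.sH Q := by
  rw [rel_edgeFE, eqvGen_or, eqvGen_push, eqvGen_push]
  rfl

/-- The gluing formula for component counts. -/
theorem omega_edgeFE (P : Finset K.E) (Q : Finset H.E) :
    G.omega (sg.edgeFE (P, Q)) + nblocks (sg.AS P) + nblocks (sg.BS Q) =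
      K.omega P + H.omega Q + nblocks (sg.AS P ⊔ sg.BS Q) := by
  have hs1 : ∀ x y, (sg.sK P) x y →
      x = y ∨ (x ∈ Set.range sg.ιK ∧ y ∈ Set.range sg.ιK) := by
    rintro x y (rfl | ⟨a, b, _, rfl, rfl⟩)
    · exact Or.inl rfl
    · exact Or.inr ⟨⟨a, rfl⟩, ⟨b, rfl⟩⟩
  have hs2 : ∀ x y, (sg.sH Q) x y →
      x = y ∨ (x ∈ Set.range sg.ιH ∧ y ∈ Set.range sg.ιH) := by
    rintro x y (rfl | ⟨a, b, _, rfl, rfl⟩)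
    · exact Or.inl rfl
    · exact Or.inr ⟨⟨a, rfl⟩, ⟨b, rfl⟩⟩
  have habs := abs_card hs1 hs2 sg.subU_K sg.subU_H (le_of_eq sg.inter) sg.cover
  have hgo : G.omega (sg.edgeFE (P, Q)) = Nat.card (Quotient (sg.sK P ⊔ sg.sH Q)) := by
    show Nat.card (Quotient (EqvGen.setoid (G.rel (sg.edgeFE (P, Q))))) = _
    rw [setoid_edgeFE]
  have hk : Nat.card (Quotient (sg.sK P)) =
      K.omega P + Nat.card ((Set.range sg.ιK)ᶜ : Set G.V) :=
    card_quot_push sg.ιK sg.injK (EqvGen.setoid (K.rel P))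
  have hh : Nat.card (Quotient (sg.sH Q)) =
      H.omega Q + Nat.card ((Set.range sg.ιH)ᶜ : Set G.V) :=
    card_quot_push sg.ιH sg.injH (EqvGen.setoid (H.rel Q))
  have hA : Nat.card (Quotient (Setoid.comap (Subtype.val : U → G.V) (sg.sK P))) =
      nblocks (sg.AS P) := rfl
  have hB : Nat.card (Quotient (Setoid.comap (Subtype.val : U → G.V) (sg.sH Q))) =
      nblocks (sg.BS Q) := rfl
  have hM : Nat.card (Quotient (Setoid.comap (Subtype.val : U → G.V) (sg.sK P) ⊔
      Setoid.comap (Subtype.val : U → G.V) (sg.sH Q))) =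
      nblocks (sg.AS P ⊔ sg.BS Q) := rfl
  rw [hA, hB, hM, hk, hh, ← hgo] at habs
  omega

end NSum

end PartBN



section PartC

/-- Classification of a sum by the value of an invariant. -/
theorem sum_classify {I κ : Type} [Fintype I] [Fintype κ] (c : I → κ)
    (g : κ → ℝ) (f : I → ℝ) :
    ∑ i, g (c i) * f i = ∑ k, g k * ∑ i, if c i = k then f i else 0 := by
  have h : ∀ k : κ, g k * (∑ i, if c i = k then f i else 0) =
      ∑ i, if c i = k then g k * f i else 0 := by
    intro k
    rw [Finset.mul_sum]
    apply Finset.sum_congr rfl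
    intro i _
    by_cases h : c i = k <;> simp [h]
  simp only [h]
  rw [Finset.sum_comm]
  apply Finset.sum_congr rfl
  intro i _
  have : ∀ k, (if c i = k then g k * f i else 0) = if c i = k then g (c i) * f i else 0 := by
    intro k
    by_cases h : c i = k <;> simp [h]
  simp only [this]
  exact (Fintype.sum_ite_eq (c i) (fun _ => g (c i) * f i)).symm

theorem sum_swap4 {α β γ δ : Type} [Fintype α] [Fintype β] [Fintype γ] [Fintype δ]
    (f : α → β → γ → δ → ℝ) :
    ∑ a, ∑ b, ∑ c, ∑ d, f a b c d = ∑ c, ∑ d, ∑ a, ∑ b, f a b c d := by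
  calc ∑ a, ∑ b, ∑ c, ∑ d, f a b c d
      = ∑ a, ∑ c, ∑ b, ∑ d, f a b c d :=
        Finset.sum_congr rfl (fun a _ => Finset.sum_comm)
    _ = ∑ a, ∑ c, ∑ d, ∑ b, f a b c d :=
        Finset.sum_congr rfl (fun a _ => Finset.sum_congr rfl
          (fun c _ => Finset.sum_comm))
    _ = ∑ c, ∑ a, ∑ d, ∑ b, f a b c d := Finset.sum_comm
    _ = ∑ c, ∑ d, ∑ a, ∑ b, f a b c d :=
        Finset.sum_congr rfl (fun c _ => Finset.sum_comm)

theorem zpow_helper {X Y : ℝ} (hX : X ≠ 0) (hY : Y ≠ 0) (a k s m pc : ℕ)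
    (h : a + m = k + s) :
    X ^ (a : ℤ) * Y ^ ((a : ℤ) + pc) =
      (X * Y) ^ (s : ℤ) * ((X * Y) ^ (-(m : ℤ)) * (X ^ (k : ℤ) * Y ^ ((k : ℤ) + pc))) := by
  have ha : (a : ℤ) = (k : ℤ) + s - m := by omega
  rw [ha, show (k : ℤ) + s - m = s + -(m : ℤ) + k from by ring]
  simp only [mul_zpow, zpow_add₀ hX, zpow_add₀ hY, zpow_neg]
  ring

theorem zpow_helper2 {X Y : ℝ} (hX : X ≠ 0) (hY : Y ≠ 0) (a k h s m1 m2 pc qc : ℕ)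
    (hid : a + m1 + m2 = k + h + s) :
    X ^ (a : ℤ) * Y ^ ((a : ℤ) + (pc + qc)) =
      (X * Y) ^ (s : ℤ) *
        (((X * Y) ^ (-(m1 : ℤ)) * (X ^ (k : ℤ) * Y ^ ((k : ℤ) + pc))) *
          ((X * Y) ^ (-(m2 : ℤ)) * (X ^ (h : ℤ) * Y ^ ((h : ℤ) + qc)))) := by
  have ha : (a : ℤ) = (k : ℤ) + h + s - m1 - m2 := by omega
  rw [ha, show (k : ℤ) + h + s - m1 - m2 = s + -(m1 : ℤ) + -(m2 : ℤ) + k + h from by ring]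
  simp only [mul_zpow, zpow_add₀ hX, zpow_add₀ hY, zpow_neg]
  ring

theorem cancel_helper (X Y F : ℝ) (hX : X ≠ 0) (hY : Y ≠ 0) (a b : ℤ) :
    X ^ a * Y ^ b * (X ^ (-a) * Y ^ (-b) * F) = F := by
  rw [zpow_neg, zpow_neg]
  field_simp

/-- Tutte polynomial in zpow normal form. -/
theorem tutte_zpow (G : Multigraph) (x y : ℝ) (hx : x - 1 ≠ 0) (hy : y - 1 ≠ 0) :
    G.tutte x y = (x - 1) ^ (-(G.omegaG : ℤ)) * (y - 1) ^ (-(Fintype.card G.V : ℤ)) *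
      ∑ S : Finset G.E,
        (x - 1) ^ (G.omega S : ℤ) * (y - 1) ^ ((G.omega S : ℤ) + S.card) := by
  rw [Multigraph.tutte, Finset.mul_sum]
  apply Finset.sum_congr rfl
  intro S _
  have h1 : G.omegaG ≤ G.omega S := G.omegaG_le S
  have h2 : Fintype.card G.V ≤ G.omega S + S.card := G.card_le_omega_add S
  have e1 : (x - 1) ^ (G.omega S - G.omegaG) =
      (x - 1) ^ ((G.omega S : ℤ) - (G.omegaG : ℤ)) := by
    rw [← zpow_natCast]
    congr 1
    omega
  have e2 : (y - 1) ^ (G.omega S + S.card - Fintype.card G.V) =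
      (y - 1) ^ (((G.omega S : ℤ) + S.card) - (Fintype.card G.V : ℤ)) := by
    rw [← zpow_natCast]
    congr 1
    push_cast
    omega
  rw [e1, e2, zpow_sub₀ hx, zpow_sub₀ hy, zpow_neg, zpow_neg]
  field_simp

namespace NSum

variable {G K H : Multigraph} {U : Set G.V} (sg : NSum G K H U) (x y : ℝ)

/-- The `A`-component of the splitting vector for `K`. -/
noncomputable def kappa (A : Setoid ↥U) : ℝ :=
  ∑ P : Finset K.E, if sg.AS P = A then
    ((x - 1) * (y - 1)) ^ (-(nblocks A : ℤ)) *
      ((x - 1) ^ (K.omega P : ℤ) * (y - 1) ^ ((K.omega P : ℤ) + P.card)) else 0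

noncomputable def eta (B : Setoid ↥U) : ℝ :=
  ∑ Q : Finset H.E, if sg.BS Q = B then
    ((x - 1) * (y - 1)) ^ (-(nblocks B : ℤ)) *
      ((x - 1) ^ (H.omega Q : ℤ) * (y - 1) ^ ((H.omega Q : ℤ) + Q.card)) else 0

variable (hx : x - 1 ≠ 0) (hy : y - 1 ≠ 0)

include hx hy in
theorem FK_eq (C : Setoid ↥U) :
    ∑ P : Finset (sg.contractK C).E,
        (x - 1) ^ ((sg.contractK C).omega P : ℤ) *
          (y - 1) ^ (((sg.contractK C).omega P : ℤ) + P.card) =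
      ∑ A : Setoid ↥U, ((x - 1) * (y - 1)) ^ (nblocks (A ⊔ C) : ℤ) * sg.kappa x y A := by
  calc ∑ P : Finset (sg.contractK C).E,
        (x - 1) ^ ((sg.contractK C).omega P : ℤ) *
          (y - 1) ^ (((sg.contractK C).omega P : ℤ) + P.card)
      = ∑ P : Finset K.E,
          (fun A : Setoid ↥U => ((x - 1) * (y - 1)) ^ (nblocks (A ⊔ C) : ℤ)) (sg.AS P) *
            (((x - 1) * (y - 1)) ^ (-(nblocks (sg.AS P) : ℤ)) *
              ((x - 1) ^ (K.omega P : ℤ) * (y - 1) ^ ((K.omega P : ℤ) + P.card))) := by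
        apply Finset.sum_congr rfl
        intro P _
        exact zpow_helper hx hy _ _ _ _ P.card (sg.contractK_omega C P)
    _ = ∑ A : Setoid ↥U, ((x - 1) * (y - 1)) ^ (nblocks (A ⊔ C) : ℤ) *
          ∑ P : Finset K.E, if sg.AS P = A then
            ((x - 1) * (y - 1)) ^ (-(nblocks (sg.AS P) : ℤ)) *
              ((x - 1) ^ (K.omega P : ℤ) * (y - 1) ^ ((K.omega P : ℤ) + P.card)) else 0 :=
        sum_classify (c := sg.AS)
          (g := fun A : Setoid ↥U => ((x - 1) * (y - 1)) ^ (nblocks (A ⊔ C) : ℤ))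
          (f := fun P : Finset K.E =>
            ((x - 1) * (y - 1)) ^ (-(nblocks (sg.AS P) : ℤ)) *
              ((x - 1) ^ (K.omega P : ℤ) * (y - 1) ^ ((K.omega P : ℤ) + P.card)))
    _ = ∑ A : Setoid ↥U, ((x - 1) * (y - 1)) ^ (nblocks (A ⊔ C) : ℤ) * sg.kappa x y A := by
        apply Finset.sum_congr rfl
        intro A _
        congr 1
        apply Finset.sum_congr rfl
        intro P _
        by_cases h : sg.AS P = A <;> simp [h, kappa]

include hx hy in
theorem FH_eq (D : Setoid ↥U) :
    ∑ Q : Finset (sg.contractH D).E,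
        (x - 1) ^ ((sg.contractH D).omega Q : ℤ) *
          (y - 1) ^ (((sg.contractH D).omega Q : ℤ) + Q.card) =
      ∑ B' : Setoid ↥U, ((x - 1) * (y - 1)) ^ (nblocks (B' ⊔ D) : ℤ) * sg.eta x y B' := by
  calc ∑ Q : Finset (sg.contractH D).E,
        (x - 1) ^ ((sg.contractH D).omega Q : ℤ) *
          (y - 1) ^ (((sg.contractH D).omega Q : ℤ) + Q.card)
      = ∑ Q : Finset H.E,
          (fun B' : Setoid ↥U => ((x - 1) * (y - 1)) ^ (nblocks (B' ⊔ D) : ℤ)) (sg.BS Q) *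
            (((x - 1) * (y - 1)) ^ (-(nblocks (sg.BS Q) : ℤ)) *
              ((x - 1) ^ (H.omega Q : ℤ) * (y - 1) ^ ((H.omega Q : ℤ) + Q.card))) := by
        apply Finset.sum_congr rfl
        intro Q _
        exact zpow_helper hx hy _ _ _ _ Q.card (sg.contractH_omega D Q)
    _ = ∑ B' : Setoid ↥U, ((x - 1) * (y - 1)) ^ (nblocks (B' ⊔ D) : ℤ) *
          ∑ Q : Finset H.E, if sg.BS Q = B' then
            ((x - 1) * (y - 1)) ^ (-(nblocks (sg.BS Q) : ℤ)) *
              ((x - 1) ^ (H.omega Q : ℤ) * (y - 1) ^ ((H.omega Q : ℤ) + Q.card)) else 0 :=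
        sum_classify (c := sg.BS)
          (g := fun B' : Setoid ↥U => ((x - 1) * (y - 1)) ^ (nblocks (B' ⊔ D) : ℤ))
          (f := fun Q : Finset H.E =>
            ((x - 1) * (y - 1)) ^ (-(nblocks (sg.BS Q) : ℤ)) *
              ((x - 1) ^ (H.omega Q : ℤ) * (y - 1) ^ ((H.omega Q : ℤ) + Q.card)))
    _ = _ := by
        apply Finset.sum_congr rfl
        intro B' _
        congr 1
        apply Finset.sum_congr rfl
        intro Q _
        by_cases h : sg.BS Q = B' <;> simp [h, eta]

include hx hy in
/-- The gluing identity for the generating sums. -/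
theorem FG_eq :
    ∑ S : Finset G.E,
        (x - 1) ^ (G.omega S : ℤ) * (y - 1) ^ ((G.omega S : ℤ) + S.card) =
      ∑ A : Setoid ↥U, ∑ B' : Setoid ↥U,
        ((x - 1) * (y - 1)) ^ (nblocks (A ⊔ B') : ℤ) * (sg.kappa x y A * sg.eta x y B') := by
  have hre : ∑ S : Finset G.E,
      (x - 1) ^ (G.omega S : ℤ) * (y - 1) ^ ((G.omega S : ℤ) + S.card) =
      ∑ PQ : Finset K.E × Finset H.E,
        (x - 1) ^ (G.omega (sg.edgeFE PQ) : ℤ) *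
          (y - 1) ^ ((G.omega (sg.edgeFE PQ) : ℤ) + (sg.edgeFE PQ).card) := by
    exact (Fintype.sum_equiv sg.edgeFE _ _ (fun PQ => rfl)).symm
  rw [hre, Fintype.sum_prod_type]
  calc ∑ P : Finset K.E, ∑ Q : Finset H.E,
        (x - 1) ^ (G.omega (sg.edgeFE (P, Q)) : ℤ) *
          (y - 1) ^ ((G.omega (sg.edgeFE (P, Q)) : ℤ) + (sg.edgeFE (P, Q)).card)
      = ∑ P : Finset K.E, ∑ Q : Finset H.E,
          ((x - 1) * (y - 1)) ^ (nblocks (sg.AS P ⊔ sg.BS Q) : ℤ) *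
            ((((x - 1) * (y - 1)) ^ (-(nblocks (sg.AS P) : ℤ)) *
              ((x - 1) ^ (K.omega P : ℤ) * (y - 1) ^ ((K.omega P : ℤ) + P.card))) *
             (((x - 1) * (y - 1)) ^ (-(nblocks (sg.BS Q) : ℤ)) *
              ((x - 1) ^ (H.omega Q : ℤ) * (y - 1) ^ ((H.omega Q : ℤ) + Q.card)))) := by
        apply Finset.sum_congr rfl
        intro P _
        apply Finset.sum_congr rfl
        intro Q _
        rw [sg.card_edgeFE P Q]
        exact zpow_helper2 hx hy _ _ _ _ _ _ P.card Q.card (sg.omega_edgeFE P Q)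
    _ = ∑ P : Finset K.E,
          ∑ B' : Setoid ↥U, ((x - 1) * (y - 1)) ^ (nblocks (sg.AS P ⊔ B') : ℤ) *
            ((((x - 1) * (y - 1)) ^ (-(nblocks (sg.AS P) : ℤ)) *
              ((x - 1) ^ (K.omega P : ℤ) * (y - 1) ^ ((K.omega P : ℤ) + P.card))) *
              ∑ Q : Finset H.E, (if sg.BS Q = B' then
                ((x - 1) * (y - 1)) ^ (-(nblocks (sg.BS Q) : ℤ)) *
                  ((x - 1) ^ (H.omega Q : ℤ) * (y - 1) ^ ((H.omega Q : ℤ) + Q.card)) else 0)) := by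
        apply Finset.sum_congr rfl
        intro P _
        have := sum_classify (c := sg.BS)
          (g := fun B' : Setoid ↥U =>
            ((x - 1) * (y - 1)) ^ (nblocks (sg.AS P ⊔ B') : ℤ) *
              (((x - 1) * (y - 1)) ^ (-(nblocks (sg.AS P) : ℤ)) *
                ((x - 1) ^ (K.omega P : ℤ) * (y - 1) ^ ((K.omega P : ℤ) + P.card))))
          (f := fun Q : Finset H.E =>
            ((x - 1) * (y - 1)) ^ (-(nblocks (sg.BS Q) : ℤ)) *
              ((x - 1) ^ (H.omega Q : ℤ) * (y - 1) ^ ((H.omega Q : ℤ) + Q.card)))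
        calc _ = ∑ Q : Finset H.E,
              (((x - 1) * (y - 1)) ^ (nblocks (sg.AS P ⊔ sg.BS Q) : ℤ) *
                (((x - 1) * (y - 1)) ^ (-(nblocks (sg.AS P) : ℤ)) *
                  ((x - 1) ^ (K.omega P : ℤ) * (y - 1) ^ ((K.omega P : ℤ) + P.card)))) *
                (((x - 1) * (y - 1)) ^ (-(nblocks (sg.BS Q) : ℤ)) *
                  ((x - 1) ^ (H.omega Q : ℤ) * (y - 1) ^ ((H.omega Q : ℤ) + Q.card))) := by
              apply Finset.sum_congr rfl
              intro Q _
              ring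
          _ = _ := by
              rw [this]
              apply Finset.sum_congr rfl
              intro B' _
              ring
    _ = ∑ B' : Setoid ↥U, ∑ P : Finset K.E,
          (((x - 1) * (y - 1)) ^ (nblocks (sg.AS P ⊔ B') : ℤ) *
            (∑ Q : Finset H.E, (if sg.BS Q = B' then
                ((x - 1) * (y - 1)) ^ (-(nblocks (sg.BS Q) : ℤ)) *
                  ((x - 1) ^ (H.omega Q : ℤ) * (y - 1) ^ ((H.omega Q : ℤ) + Q.card)) else 0))) *
            (((x - 1) * (y - 1)) ^ (-(nblocks (sg.AS P) : ℤ)) *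
              ((x - 1) ^ (K.omega P : ℤ) * (y - 1) ^ ((K.omega P : ℤ) + P.card))) := by
        rw [Finset.sum_comm]
        apply Finset.sum_congr rfl
        intro B' _
        apply Finset.sum_congr rfl
        intro P _
        ring
    _ = ∑ B' : Setoid ↥U, ∑ A : Setoid ↥U,
          (((x - 1) * (y - 1)) ^ (nblocks (A ⊔ B') : ℤ) *
            (∑ Q : Finset H.E, (if sg.BS Q = B' then
                ((x - 1) * (y - 1)) ^ (-(nblocks (sg.BS Q) : ℤ)) *
                  ((x - 1) ^ (H.omega Q : ℤ) * (y - 1) ^ ((H.omega Q : ℤ) + Q.card)) else 0))) *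
            (∑ P : Finset K.E, (if sg.AS P = A then
                ((x - 1) * (y - 1)) ^ (-(nblocks (sg.AS P) : ℤ)) *
                  ((x - 1) ^ (K.omega P : ℤ) * (y - 1) ^ ((K.omega P : ℤ) + P.card)) else 0)) := by
        apply Finset.sum_congr rfl
        intro B' _
        exact sum_classify (c := sg.AS)
          (g := fun A : Setoid ↥U =>
            ((x - 1) * (y - 1)) ^ (nblocks (A ⊔ B') : ℤ) *
              (∑ Q : Finset H.E, (if sg.BS Q = B' then
                ((x - 1) * (y - 1)) ^ (-(nblocks (sg.BS Q) : ℤ)) *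
                  ((x - 1) ^ (H.omega Q : ℤ) * (y - 1) ^ ((H.omega Q : ℤ) + Q.card)) else 0)))
          (f := fun P : Finset K.E =>
            ((x - 1) * (y - 1)) ^ (-(nblocks (sg.AS P) : ℤ)) *
              ((x - 1) ^ (K.omega P : ℤ) * (y - 1) ^ ((K.omega P : ℤ) + P.card)))
    _ = _ := by
        rw [Finset.sum_comm]
        apply Finset.sum_congr rfl
        intro A _
        apply Finset.sum_congr rfl
        intro B' _
        have hk : sg.kappa x y A = ∑ P : Finset K.E, (if sg.AS P = A then
            ((x - 1) * (y - 1)) ^ (-(nblocks (sg.AS P) : ℤ)) *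
              ((x - 1) ^ (K.omega P : ℤ) * (y - 1) ^ ((K.omega P : ℤ) + P.card)) else 0) := by
          apply Finset.sum_congr rfl
          intro P _
          by_cases h : sg.AS P = A <;> simp [h]
        have he : sg.eta x y B' = ∑ Q : Finset H.E, (if sg.BS Q = B' then
            ((x - 1) * (y - 1)) ^ (-(nblocks (sg.BS Q) : ℤ)) *
              ((x - 1) ^ (H.omega Q : ℤ) * (y - 1) ^ ((H.omega Q : ℤ) + Q.card)) else 0) := by
          apply Finset.sum_congr rfl
          intro Q _
          by_cases h : sg.BS Q = B' <;> simp [h]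
        rw [hk, he]
        ring

end NSum

end PartC


/-- Negami's splitting formula for the Tutte polynomial of an
`n`-sum in the region `x ≠ 1`, `y ≠ 1`. -/
theorem tutte_splitting_formula
    (G K H : Multigraph) (U : Set G.V) (n : ℕ) (hn : 1 ≤ n)
    (sg : NSum G K H U) (hU : Nat.card ↥U = n) (x y : ℝ) (hx : x ≠ 1) (hy : y ≠ 1)
    (B : Matrix (Setoid ↥U) (Setoid ↥U) ℝ)
    (hB : Tmat ↥U ((x - 1) * (y - 1)) * B * Tmat ↥U ((x - 1) * (y - 1)) =
      Tmat ↥U ((x - 1) * (y - 1))) :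
    G.tutte x y =
      ∑ A : Setoid ↥U, ∑ B' : Setoid ↥U,
        (B A B' *
          (x - 1) ^ (((sg.contractK A).omegaG : ℤ) + ((sg.contractH B').omegaG : ℤ) - (G.omegaG : ℤ)) *
          (y - 1) ^ ((nblocks A : ℤ) + (nblocks B' : ℤ) - (n : ℤ))) *
          (sg.contractK A).tutte x y * (sg.contractH B').tutte x y := by
  subst hU
  have hx' : x - 1 ≠ 0 := sub_ne_zero.mpr hx
  have hy' : y - 1 ≠ 0 := sub_ne_zero.mpr hy
  have ht : (x - 1) * (y - 1) ≠ 0 := mul_ne_zero hx' hy'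
  -- entrywise form of the matrix hypothesis
  have hBe : ∀ A B' : Setoid ↥U,
      ((x - 1) * (y - 1)) ^ (nblocks (A ⊔ B') : ℤ) =
        ∑ C : Setoid ↥U, ∑ D : Setoid ↥U,
          ((x - 1) * (y - 1)) ^ (nblocks (A ⊔ C) : ℤ) *
            (B C D * ((x - 1) * (y - 1)) ^ (nblocks (D ⊔ B') : ℤ)) := by
    intro A B'
    have h : (Tmat ↥U ((x - 1) * (y - 1)) * B * Tmat ↥U ((x - 1) * (y - 1))) A B' =
        Tmat ↥U ((x - 1) * (y - 1)) A B' := by rw [hB]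
    simp only [Matrix.mul_apply, Tmat, Matrix.of_apply] at h
    simp only [zpow_natCast]
    rw [← h]
    symm
    calc ∑ C : Setoid ↥U, ∑ D : Setoid ↥U,
          ((x - 1) * (y - 1)) ^ nblocks (A ⊔ C) *
            (B C D * ((x - 1) * (y - 1)) ^ nblocks (D ⊔ B'))
        = ∑ D : Setoid ↥U, ∑ C : Setoid ↥U,
            (((x - 1) * (y - 1)) ^ nblocks (A ⊔ C) * B C D) *
              ((x - 1) * (y - 1)) ^ nblocks (D ⊔ B') := by
          rw [Finset.sum_comm]
          exact Finset.sum_congr rfl (fun D _ => Finset.sum_congr rfl (fun C _ => by ring))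
      _ = ∑ D : Setoid ↥U, (∑ C : Setoid ↥U,
            ((x - 1) * (y - 1)) ^ nblocks (A ⊔ C) * B C D) *
              ((x - 1) * (y - 1)) ^ nblocks (D ⊔ B') :=
          Finset.sum_congr rfl (fun D _ => (Finset.sum_mul _ _ _).symm)
  -- the splitting vectors reassemble into Tutte polynomials of the contractions
  have hSA : ∀ C : Setoid ↥U,
      ∑ A : Setoid ↥U, ((x - 1) * (y - 1)) ^ (nblocks (A ⊔ C) : ℤ) * sg.kappa x y A =
        (x - 1) ^ ((sg.contractK C).omegaG : ℤ) *
          (y - 1) ^ ((Fintype.card (sg.contractK C).V : ℤ)) *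
          (sg.contractK C).tutte x y := by
    intro C
    rw [← sg.FK_eq x y hx' hy' C, tutte_zpow (sg.contractK C) x y hx' hy']
    exact (cancel_helper _ _ _ hx' hy' _ _).symm
  have hSB : ∀ D : Setoid ↥U,
      ∑ B' : Setoid ↥U, ((x - 1) * (y - 1)) ^ (nblocks (B' ⊔ D) : ℤ) * sg.eta x y B' =
        (x - 1) ^ ((sg.contractH D).omegaG : ℤ) *
          (y - 1) ^ ((Fintype.card (sg.contractH D).V : ℤ)) *
          (sg.contractH D).tutte x y := by
    intro D
    rw [← sg.FH_eq x y hx' hy' D, tutte_zpow (sg.contractH D) x y hx' hy']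
    exact (cancel_helper _ _ _ hx' hy' _ _).symm
  -- main rearrangement
  have key : ∑ A : Setoid ↥U, ∑ B' : Setoid ↥U,
      ((x - 1) * (y - 1)) ^ (nblocks (A ⊔ B') : ℤ) * (sg.kappa x y A * sg.eta x y B') =
      ∑ C : Setoid ↥U, ∑ D : Setoid ↥U, B C D *
        ((∑ A : Setoid ↥U, ((x - 1) * (y - 1)) ^ (nblocks (A ⊔ C) : ℤ) * sg.kappa x y A) *
         (∑ B' : Setoid ↥U, ((x - 1) * (y - 1)) ^ (nblocks (B' ⊔ D) : ℤ) * sg.eta x y B')) := by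
    calc ∑ A : Setoid ↥U, ∑ B' : Setoid ↥U,
          ((x - 1) * (y - 1)) ^ (nblocks (A ⊔ B') : ℤ) * (sg.kappa x y A * sg.eta x y B')
        = ∑ A : Setoid ↥U, ∑ B' : Setoid ↥U, ∑ C : Setoid ↥U, ∑ D : Setoid ↥U,
            ((x - 1) * (y - 1)) ^ (nblocks (A ⊔ C) : ℤ) *
              (B C D * ((x - 1) * (y - 1)) ^ (nblocks (D ⊔ B') : ℤ)) *
                (sg.kappa x y A * sg.eta x y B') := by
          apply Finset.sum_congr rfl
          intro A _
          apply Finset.sum_congr rfl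
          intro B' _
          rw [hBe A B', Finset.sum_mul]
          exact Finset.sum_congr rfl (fun C _ => Finset.sum_mul _ _ _)
      _ = ∑ C : Setoid ↥U, ∑ D : Setoid ↥U, ∑ A : Setoid ↥U, ∑ B' : Setoid ↥U,
            ((x - 1) * (y - 1)) ^ (nblocks (A ⊔ C) : ℤ) *
              (B C D * ((x - 1) * (y - 1)) ^ (nblocks (D ⊔ B') : ℤ)) *
                (sg.kappa x y A * sg.eta x y B') := sum_swap4 _
      _ = _ := by
          apply Finset.sum_congr rfl
          intro C _
          apply Finset.sum_congr rfl
          intro D _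
          rw [Finset.sum_mul_sum, Finset.mul_sum]
          apply Finset.sum_congr rfl
          intro A _
          rw [Finset.mul_sum]
          apply Finset.sum_congr rfl
          intro B' _
          have hsup : nblocks (D ⊔ B') = nblocks (B' ⊔ D) := by rw [sup_comm]
          rw [hsup]
          ring
  rw [tutte_zpow G x y hx' hy', sg.FG_eq x y hx' hy', key]
  simp only [hSA, hSB]
  rw [Finset.mul_sum]
  apply Finset.sum_congr rfl
  intro C _
  rw [Finset.mul_sum]
  apply Finset.sum_congr rfl
  intro D _
  -- exponent bookkeeping
  have hcK := sg.card_contractK C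
  have hcH := sg.card_contractH D
  have hcG := sg.card_V_G
  have hexp : (Fintype.card (sg.contractK C).V : ℤ) + (Fintype.card (sg.contractH D).V : ℤ) -
      (Fintype.card G.V : ℤ) = (nblocks C : ℤ) + (nblocks D : ℤ) - (Nat.card ↥U : ℤ) := by
    omega
  rw [show ((sg.contractK C).omegaG : ℤ) + ((sg.contractH D).omegaG : ℤ) - (G.omegaG : ℤ) =
      ((sg.contractK C).omegaG : ℤ) + ((sg.contractH D).omegaG : ℤ) + -(G.omegaG : ℤ) from by
        ring,
    show (nblocks C : ℤ) + (nblocks D : ℤ) - (Nat.card ↥U : ℤ) =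
      (Fintype.card (sg.contractK C).V : ℤ) + (Fintype.card (sg.contractH D).V : ℤ) +
        -(Fintype.card G.V : ℤ) from by omega]
  simp only [zpow_add₀ hx', zpow_add₀ hy', zpow_neg]
  ring
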